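/- arXiv:0912.0308 — 6 statements merged into one kernel-verified Lean document; each statement's English description precedes it below -/
import Mathlib

section
/- Suppose that G is a finite group and A ⊆ G is nonempty with ‖1_A‖_{A(G)} < 1 + 1/750. Then there is a subgroup H ≤ G and an element x ∈ G such that A = Hx. -/
open scoped BigOperators Pointwise

noncomputable section

variable {G : Type*}

/-- Convolution of complex-valued functions on a finite group `G`,
normalized by the Haar probability measure: `f∗g(x) = (1/|G|)·∑ y, f y * g (y⁻¹x)`. -/
def convC [Group G] [Fintype G] (f g : G → ℂ) : G → ℂ :=
  fun x => (Fintype.card G : ℂ)⁻¹ * ∑ y : G, f y * g (y⁻¹ * x)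

/-- The inner product on `L²(μ_G)`: `⟨f,g⟩ = (1/|G|)·∑ x, f x * conj (g x)`. -/
def innerG [Group G] [Fintype G] (f g : G → ℂ) : ℂ :=
  (Fintype.card G : ℂ)⁻¹ * ∑ x : G, f x * (starRingEnd ℂ) (g x)

/-- The `L²(μ_G)` norm. -/
def l2normG [Group G] [Fintype G] (f : G → ℂ) : ℝ :=
  Real.sqrt ((Fintype.card G : ℝ)⁻¹ * ∑ x : G, ‖f x‖ ^ 2)

/-- `‖f‖_{PM(G)}`: operator norm of `v ↦ f ∗ v` on `L²(μ_G)`. -/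
def PMnorm [Group G] [Fintype G] (f : G → ℂ) : ℝ :=
  sSup {r : ℝ | ∃ v : G → ℂ, l2normG v ≤ 1 ∧ r = l2normG (convC f v)}

/-- The algebra norm `‖f‖_{A(G)} = sup{|⟨f,g⟩| : ‖g‖_{PM(G)} ≤ 1}`. -/
def Anorm [Group G] [Fintype G] (f : G → ℂ) : ℝ :=
  sSup {r : ℝ | ∃ g : G → ℂ, PMnorm g ≤ 1 ∧ r = ‖innerG f g‖}

/-- Complex-valued indicator function of a set. -/
def indC (A : Set G) : G → ℂ := Set.indicator A (1 : G → ℂ)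

/-- `μ_A = (|G|/|A|)·1_A`, the density of the uniform probability measure on `A`. -/
def muC [Fintype G] (A : Set G) : G → ℂ :=
  fun x => ((Fintype.card G : ℂ) / (Nat.card A : ℂ)) * indC A x

/-- `μ_G(S) = |S|/|G|`. -/
def density [Fintype G] (S : Set G) : ℝ :=
  (Nat.card S : ℝ) / (Fintype.card G : ℝ)

/-- Real-valued convolution, normalized by `|G|`. -/
def convR [Group G] [Fintype G] (f g : G → ℝ) : G → ℝ :=
  fun x => (Fintype.card G : ℝ)⁻¹ * ∑ y : G, f y * g (y⁻¹ * x)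

/-- Real-valued indicator function of a set. -/
def indR (A : Set G) : G → ℝ := Set.indicator A (1 : G → ℝ)

/-- `μ_A = (|G|/|A|)·1_A`, real-valued. -/
def muR [Fintype G] (A : Set G) : G → ℝ :=
  fun x => ((Fintype.card G : ℝ) / (Nat.card A : ℝ)) * indR A x

/-- The symmetry set `Sym_η(A) = {x : 1_A ∗ 1_{A⁻¹}(x) ≥ η·μ_G(A)}`. -/
def symmSet [Group G] [Fintype G] (A : Set G) (η : ℝ) : Set G :=
  {x : G | η * density A ≤ convR (indR A) (indR A⁻¹) x}

/-- `(B, B′)` is an `ε`-closed, `c`-thick, `r`-multiplicative pair: both are symmetric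
neighbourhoods of the identity, `μ_G(B′) ≥ c·μ_G(B)`, and there are symmetric
neighbourhoods of the identity `B⁺, B⁻` with `B′^r·B⁻·B′^r ⊆ B`, `B′^r·B·B′^r ⊆ B⁺`
and `μ_G(B⁺ \ B⁻) ≤ ε·μ_G(B)`. -/
def IsMultPair [Group G] [Fintype G] (B B' : Set G) (r : ℕ) (ε c : ℝ) : Prop :=
  (1 ∈ B ∧ B⁻¹ = B) ∧ (1 ∈ B' ∧ B'⁻¹ = B') ∧
  c * density B ≤ density B' ∧
  ∃ Bp Bm : Set G, (1 ∈ Bp ∧ Bp⁻¹ = Bp) ∧ (1 ∈ Bm ∧ Bm⁻¹ = Bm) ∧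
    B' ^ r * Bm * B' ^ r ⊆ B ∧ B' ^ r * B * B' ^ r ⊆ Bp ∧
    density (Bp \ Bm) ≤ ε * density B


lemma sum_sq_translate [Group G] [Fintype G] (g : G) (f : G → ℂ) :
    ∑ x : G, ‖f (g * x)‖ ^ 2 = ∑ x : G, ‖f x‖ ^ 2 :=
  Fintype.sum_equiv (Equiv.mulLeft g) _ _ (fun x => rfl)

lemma abs_add_sq_le_two (u w : ℂ) :
    ‖u + w‖ ^ 2 ≤ 2 * ‖u‖ ^ 2 + 2 * ‖w‖ ^ 2 := by
  have h := norm_add_le u w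
  nlinarith [norm_nonneg u, norm_nonneg w, norm_nonneg (u + w),
    sq_nonneg (‖u‖ - ‖w‖)]

lemma abs_parallelogram (u w : ℂ) :
    ‖u + w‖ ^ 2 + ‖u - w‖ ^ 2
      = 2 * ‖u‖ ^ 2 + 2 * ‖w‖ ^ 2 := by
  simp only [Complex.sq_norm, Complex.normSq_apply, Complex.add_re, Complex.add_im,
    Complex.sub_re, Complex.sub_im]
  ring

lemma key_bound [Group G] [Fintype G] (a b c : G) (v : G → ℂ) :
    ∑ x : G, ‖v (a⁻¹*x) + v (b⁻¹*x) + v (c⁻¹*x) - v ((a*b⁻¹*c)⁻¹*x)‖ ^ 2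
      ≤ 8 * ∑ x : G, ‖v x‖ ^ 2 := by
  have hrw : ∀ x : G,
      v (a⁻¹*x) + v (b⁻¹*x) + v (c⁻¹*x) - v ((a*b⁻¹*c)⁻¹*x)
        = (v (b⁻¹*x) + v (c⁻¹*x)) + (v (b⁻¹*(b*a⁻¹*x)) - v (c⁻¹*(b*a⁻¹*x))) := by
    intro x
    have h1 : b⁻¹*(b*a⁻¹*x) = a⁻¹*x := by group
    have h2 : c⁻¹*(b*a⁻¹*x) = (a*b⁻¹*c)⁻¹*x := by group
    rw [h1, h2]; ring
  have htr : ∑ x : G, ‖v (b⁻¹*(b*a⁻¹*x)) - v (c⁻¹*(b*a⁻¹*x))‖ ^ 2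
      = ∑ x : G, ‖v (b⁻¹*x) - v (c⁻¹*x)‖ ^ 2 := by
    have := sum_sq_translate (G := G) (b*a⁻¹) (fun t => v (b⁻¹*t) - v (c⁻¹*t))
    simpa using this
  have htb : ∑ x : G, ‖v (b⁻¹*x)‖ ^ 2 = ∑ x : G, ‖v x‖ ^ 2 :=
    sum_sq_translate b⁻¹ v
  have htc : ∑ x : G, ‖v (c⁻¹*x)‖ ^ 2 = ∑ x : G, ‖v x‖ ^ 2 :=
    sum_sq_translate c⁻¹ v
  calc ∑ x : G, ‖v (a⁻¹*x) + v (b⁻¹*x) + v (c⁻¹*x) - v ((a*b⁻¹*c)⁻¹*x)‖ ^ 2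
      = ∑ x : G, ‖(v (b⁻¹*x) + v (c⁻¹*x)) + (v (b⁻¹*(b*a⁻¹*x)) - v (c⁻¹*(b*a⁻¹*x)))‖ ^ 2 :=
        Finset.sum_congr rfl fun x _ => by rw [hrw x]
    _ ≤ ∑ x : G, (2 * ‖v (b⁻¹*x) + v (c⁻¹*x)‖ ^ 2
          + 2 * ‖v (b⁻¹*(b*a⁻¹*x)) - v (c⁻¹*(b*a⁻¹*x))‖ ^ 2) :=
        Finset.sum_le_sum fun x _ => abs_add_sq_le_two _ _
    _ = 2 * ∑ x : G, ‖v (b⁻¹*x) + v (c⁻¹*x)‖ ^ 2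
          + 2 * ∑ x : G, ‖v (b⁻¹*(b*a⁻¹*x)) - v (c⁻¹*(b*a⁻¹*x))‖ ^ 2 := by
        rw [Finset.sum_add_distrib, Finset.mul_sum, Finset.mul_sum]
    _ = 2 * ∑ x : G, ‖v (b⁻¹*x) + v (c⁻¹*x)‖ ^ 2
          + 2 * ∑ x : G, ‖v (b⁻¹*x) - v (c⁻¹*x)‖ ^ 2 := by rw [htr]
    _ = ∑ x : G, (2 * (‖v (b⁻¹*x) + v (c⁻¹*x)‖ ^ 2
          + ‖v (b⁻¹*x) - v (c⁻¹*x)‖ ^ 2)) := by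
        rw [Finset.sum_congr rfl fun (x : G) _ => (mul_add (2:ℝ) _ _),
          Finset.sum_add_distrib, Finset.mul_sum, Finset.mul_sum]
    _ = ∑ x : G, (2 * (2 * ‖v (b⁻¹*x)‖ ^ 2 + 2 * ‖v (c⁻¹*x)‖ ^ 2)) :=
        Finset.sum_congr rfl fun x _ => by rw [abs_parallelogram]
    _ = 4 * ∑ x : G, ‖v (b⁻¹*x)‖ ^ 2 + 4 * ∑ x : G, ‖v (c⁻¹*x)‖ ^ 2 := by
        rw [Finset.sum_congr rfl fun (x : G) _ =>
          (show 2 * (2 * ‖v (b⁻¹*x)‖ ^ 2 + 2 * ‖v (c⁻¹*x)‖ ^ 2)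
            = 4 * ‖v (b⁻¹*x)‖ ^ 2 + 4 * ‖v (c⁻¹*x)‖ ^ 2 from by ring),
          Finset.sum_add_distrib, Finset.mul_sum, Finset.mul_sum]
    _ = 8 * ∑ x : G, ‖v x‖ ^ 2 := by rw [htb, htc]; ring

lemma sum_sq_le_of_l2_le_one [Group G] [Fintype G] {v : G → ℂ} (hv : l2normG v ≤ 1) :
    ∑ x : G, ‖v x‖ ^ 2 ≤ (Fintype.card G : ℝ) := by
  have hN : (0:ℝ) < (Fintype.card G : ℝ) := Nat.cast_pos.mpr Fintype.card_pos
  simp only [l2normG] at hv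
  have h0 : (0:ℝ) ≤ (Fintype.card G : ℝ)⁻¹ * ∑ x : G, ‖v x‖ ^ 2 := by positivity
  have h1 : (Fintype.card G : ℝ)⁻¹ * ∑ x : G, ‖v x‖ ^ 2 ≤ 1 := by
    nlinarith [Real.sq_sqrt h0,
      Real.sqrt_nonneg ((Fintype.card G : ℝ)⁻¹ * ∑ x : G, ‖v x‖ ^ 2)]
  have h2 : (Fintype.card G : ℝ) * ((Fintype.card G : ℝ)⁻¹ * ∑ x : G, ‖v x‖ ^ 2)
      = ∑ x : G, ‖v x‖ ^ 2 := by field_simp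
  nlinarith [h1, hN]

lemma abs_le_of_PMnorm_le_one [Group G] [Fintype G] (g : G → ℂ) (hg : PMnorm g ≤ 1) (x : G) :
    ‖g x‖ ≤ (Fintype.card G : ℝ) := by
  classical
  set N : ℝ := (Fintype.card G : ℝ) with hNdef
  have hN : (0:ℝ) < N := Nat.cast_pos.mpr Fintype.card_pos
  have hNC : (Fintype.card G : ℂ) ≠ 0 := Nat.cast_ne_zero.mpr Fintype.card_ne_zero
  -- the PM-norm set is bounded above
  have hbdd : BddAbove {r : ℝ | ∃ v : G → ℂ, l2normG v ≤ 1 ∧ r = l2normG (convC g v)} := by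
    refine ⟨(∑ y : G, ‖g y‖) * Real.sqrt N / N, ?_⟩
    rintro r ⟨v, hv, rfl⟩
    set C : ℝ := (∑ y : G, ‖g y‖) * Real.sqrt N / N with hC
    have hC0 : 0 ≤ C := by
      apply div_nonneg _ hN.le
      exact mul_nonneg (Finset.sum_nonneg fun y _ => norm_nonneg _) (Real.sqrt_nonneg _)
    have hvsum := sum_sq_le_of_l2_le_one hv
    have hvpt : ∀ t : G, ‖v t‖ ≤ Real.sqrt N := by
      intro t
      have h1 : ‖v t‖ ^ 2 ≤ ∑ z : G, ‖v z‖ ^ 2 :=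
        Finset.single_le_sum (f := fun z => ‖v z‖ ^ 2)
          (fun z _ => by positivity) (Finset.mem_univ t)
      have := Real.sqrt_le_sqrt (h1.trans hvsum)
      rwa [Real.sqrt_sq (norm_nonneg _)] at this
    have hcpt : ∀ t : G, ‖convC g v t‖ ≤ C := by
      intro t
      have h1 : ‖∑ y : G, g y * v (y⁻¹ * t)‖
          ≤ ∑ y : G, ‖g y‖ * Real.sqrt N := by
        refine (norm_sum_le _ _).trans (Finset.sum_le_sum fun y _ => ?_)
        rw [norm_mul]
        exact mul_le_mul_of_nonneg_left (hvpt _) (norm_nonneg _)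
      have h2 : ‖convC g v t‖
          = N⁻¹ * ‖∑ y : G, g y * v (y⁻¹ * t)‖ := by
        simp only [convC, norm_mul, norm_inv, Complex.norm_natCast, hNdef]
      rw [← Finset.sum_mul] at h1
      rw [h2, hC]
      calc N⁻¹ * ‖∑ y : G, g y * v (y⁻¹ * t)‖
          ≤ N⁻¹ * ((∑ y : G, ‖g y‖) * Real.sqrt N) :=
            mul_le_mul_of_nonneg_left h1 (by positivity)
        _ = (∑ y : G, ‖g y‖) * Real.sqrt N / N := by ring
    -- now the l2 norm bound
    have : (Fintype.card G : ℝ)⁻¹ * ∑ t : G, ‖convC g v t‖ ^ 2 ≤ C ^ 2 := by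
      have h3 : ∑ t : G, ‖convC g v t‖ ^ 2 ≤ ∑ _t : G, C ^ 2 :=
        Finset.sum_le_sum fun t _ => by nlinarith [hcpt t, norm_nonneg (convC g v t)]
      have h4 : ∑ _t : G, (C^2 : ℝ) = N * C ^ 2 := by
        rw [Finset.sum_const, Finset.card_univ, nsmul_eq_mul, hNdef]
      calc (Fintype.card G : ℝ)⁻¹ * ∑ t : G, ‖convC g v t‖ ^ 2
          ≤ N⁻¹ * (N * C ^ 2) := by
            rw [← hNdef]
            exact mul_le_mul_of_nonneg_left (h3.trans_eq h4) (by positivity)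
        _ = C ^ 2 := by field_simp
    calc l2normG (convC g v) ≤ Real.sqrt (C ^ 2) := Real.sqrt_le_sqrt this
      _ = C := Real.sqrt_sq hC0
  -- test vector
  set v0 : G → ℂ := fun t => if t = (1:G) then ((Real.sqrt N : ℝ) : ℂ) else 0 with hv0
  have hv0n : l2normG v0 ≤ 1 := by
    have hsum : ∑ t : G, ‖v0 t‖ ^ 2 = N := by
      rw [Finset.sum_eq_single (1:G)]
      · simp [hv0, Complex.norm_real, Real.norm_eq_abs, abs_of_nonneg (Real.sqrt_nonneg N),
          Real.sq_sqrt hN.le]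
      · intro t _ ht; simp [hv0, ht]
      · intro ht; exact absurd (Finset.mem_univ _) ht
    simp only [l2normG, hsum, ← hNdef]
    rw [inv_mul_cancel₀ hN.ne', Real.sqrt_one]
  have hconv0 : ∀ t : G, convC g v0 t = (Fintype.card G : ℂ)⁻¹ * (g t * ((Real.sqrt N : ℝ) : ℂ)) := by
    intro t
    simp only [convC, hv0]
    congr 1
    rw [Finset.sum_eq_single t]
    · simp
    · intro y _ hy
      have : ¬ (y⁻¹ * t = 1) := by
        intro hcon; exact hy (by rwa [inv_mul_eq_one] at hcon)
      simp [this]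
    · intro ht; exact absurd (Finset.mem_univ _) ht
  have hl2conv : l2normG (convC g v0) = N⁻¹ * Real.sqrt (∑ t : G, ‖g t‖ ^ 2) := by
    have : ∀ t : G, ‖convC g v0 t‖ ^ 2 = N⁻¹ ^ 2 * N * ‖g t‖ ^ 2 := by
      intro t
      rw [hconv0 t, norm_mul, norm_mul, norm_inv, Complex.norm_natCast, Complex.norm_real, Real.norm_eq_abs,
        abs_of_nonneg (Real.sqrt_nonneg N), ← hNdef]
      have : Real.sqrt N ^ 2 = N := Real.sq_sqrt hN.le
      nlinarith [norm_nonneg (g t)]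
    rw [l2normG, Finset.sum_congr rfl fun t _ => this t, ← Finset.mul_sum, ← hNdef]
    rw [show N⁻¹ * (N⁻¹ ^ 2 * N * ∑ t : G, ‖g t‖ ^ 2)
      = (N⁻¹ * N) * (N⁻¹ ^ 2 * ∑ t : G, ‖g t‖ ^ 2) from by ring,
      inv_mul_cancel₀ hN.ne', one_mul]
    rw [Real.sqrt_mul (by positivity), Real.sqrt_sq (by positivity)]
  have hmem : l2normG (convC g v0) ≤ PMnorm g := le_csSup hbdd ⟨v0, hv0n, rfl⟩
  have h5 : Real.sqrt (∑ t : G, ‖g t‖ ^ 2) ≤ N := by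
    rw [hl2conv] at hmem
    have h7 := hmem.trans hg
    have h8 := mul_le_mul_of_nonneg_left h7 hN.le
    have h9 : N * (N⁻¹ * Real.sqrt (∑ t : G, ‖g t‖ ^ 2))
        = Real.sqrt (∑ t : G, ‖g t‖ ^ 2) := by field_simp
    linarith
  have h6 : ‖g x‖ ^ 2 ≤ N ^ 2 := by
    have h1 : ‖g x‖ ^ 2 ≤ ∑ t : G, ‖g t‖ ^ 2 :=
      Finset.single_le_sum (f := fun t => ‖g t‖ ^ 2)
        (fun t _ => by positivity) (Finset.mem_univ x)
    have h2 : ∑ t : G, ‖g t‖ ^ 2 ≤ N ^ 2 := by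
      nlinarith [Real.sq_sqrt (show (0:ℝ) ≤ ∑ t : G, ‖g t‖ ^ 2 from
        Finset.sum_nonneg fun t _ => by positivity), h5,
        Real.sqrt_nonneg (∑ t : G, ‖g t‖ ^ 2)]
    linarith
  nlinarith [norm_nonneg (g x), hN]

/-- Indicator functions of algebra norm less than `1 + 1/750` are right cosets. -/
theorem indicator_small_algebra_norm_is_coset {G : Type*} [Group G] [Fintype G]
    (A : Set G) (hA : A.Nonempty) (h : Anorm (indC A) < 1 + 1 / 750) :
    ∃ (H : Subgroup G) (x : G), A = (fun h => h * x) '' (H : Set G) := by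
  classical
  by_cases hcl : ∀ a ∈ A, ∀ b ∈ A, ∀ c ∈ A, a * b⁻¹ * c ∈ A
  · obtain ⟨x, hx⟩ := hA
    refine ⟨{ carrier := (fun h => h * x⁻¹) '' A
              one_mem' := ⟨x, hx, by group⟩
              mul_mem' := ?_
              inv_mem' := ?_ }, x, ?_⟩
    · rintro p q ⟨p', hp', rfl⟩ ⟨q', hq', rfl⟩
      exact ⟨p' * x⁻¹ * q', hcl p' hp' x hx q' hq', by group⟩
    · rintro p ⟨p', hp', rfl⟩
      exact ⟨x * p'⁻¹ * x, hcl x hx p' hp' x hx, by group⟩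
    · ext t
      simp only [Set.mem_image, Subgroup.mem_mk, SetLike.mem_coe, Subgroup.coe_set_mk]
      constructor
      · intro ht
        exact ⟨t * x⁻¹, ⟨t, ht, rfl⟩, by group⟩
      · rintro ⟨q, ⟨p', hp', rfl⟩, rfl⟩
        simpa using hp'
  · exfalso
    push_neg at hcl
    obtain ⟨a, ha, b, hb, c, hc, hd⟩ := hcl
    have hN : (0:ℝ) < (Fintype.card G : ℝ) := Nat.cast_pos.mpr Fintype.card_pos
    have hNC : (Fintype.card G : ℂ) ≠ 0 := Nat.cast_ne_zero.mpr Fintype.card_ne_zero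
    set s : ℝ := Real.sqrt 2 with hs
    have hs0 : (0:ℝ) < s := Real.sqrt_pos.mpr (by norm_num)
    have hs2 : s ^ 2 = 2 := Real.sq_sqrt (by norm_num)
    set d : G := a * b⁻¹ * c with hdd
    set g : G → ℂ := fun t => (Fintype.card G : ℂ) * (((2*s)⁻¹ : ℝ) : ℂ) *
      ((if t = a then 1 else 0) + (if t = b then 1 else 0) + (if t = c then 1 else 0)
        - (if t = d then 1 else 0)) with hg
    -- PM norm of g is at most 1
    have hPM : PMnorm g ≤ 1 := by
      refine Real.sSup_le ?_ zero_le_one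
      rintro r ⟨v, hv, rfl⟩
      have hv2 := sum_sq_le_of_l2_le_one hv
      have hsum : ∀ x : G, ∑ y : G, ((if y = a then (1:ℂ) else 0) + (if y = b then 1 else 0)
            + (if y = c then 1 else 0) - (if y = d then 1 else 0)) * v (y⁻¹*x)
          = v (a⁻¹*x) + v (b⁻¹*x) + v (c⁻¹*x) - v (d⁻¹*x) := by
        intro x
        simp [add_mul, sub_mul, ite_mul, Finset.sum_add_distrib, Finset.sum_sub_distrib]
      have hconv : ∀ x : G, convC g v x =
          (((2*s)⁻¹ : ℝ) : ℂ) * (v (a⁻¹*x) + v (b⁻¹*x) + v (c⁻¹*x) - v (d⁻¹*x)) := by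
        intro x
        simp only [convC, hg, mul_assoc, ← Finset.mul_sum]
        rw [inv_mul_cancel_left₀ hNC, hsum x]
      have habs : ∀ x : G, ‖convC g v x‖ ^ 2 =
          ((2*s)⁻¹)^2 * ‖v (a⁻¹*x) + v (b⁻¹*x) + v (c⁻¹*x) - v (d⁻¹*x)‖ ^ 2 := by
        intro x
        rw [hconv x, norm_mul, Complex.norm_real, Real.norm_eq_abs, abs_of_nonneg (by positivity), mul_pow]
      have hkey := key_bound a b c v
      rw [← hdd] at hkey
      have e2 : ((2*s)⁻¹:ℝ)^2 * 8 = 1 := by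
        have h8 : ((2*s)^2 : ℝ) = 8 := by nlinarith [hs2]
        rw [inv_pow, inv_mul_eq_one₀ (by positivity), h8]
      have hle : (Fintype.card G : ℝ)⁻¹ * ∑ x : G, ‖convC g v x‖ ^ 2 ≤ 1 := by
        have e1 : ∑ x : G, ‖convC g v x‖ ^ 2
            = ((2*s)⁻¹:ℝ)^2 * ∑ x : G, ‖v (a⁻¹*x) + v (b⁻¹*x) + v (c⁻¹*x) - v (d⁻¹*x)‖ ^ 2 := by
          rw [Finset.mul_sum]; exact Finset.sum_congr rfl fun x _ => habs x
        calc (Fintype.card G : ℝ)⁻¹ * ∑ x : G, ‖convC g v x‖ ^ 2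
            ≤ (Fintype.card G : ℝ)⁻¹ * (((2*s)⁻¹:ℝ)^2 * (8 * ∑ x : G, ‖v x‖ ^ 2)) := by
              rw [e1]
              exact mul_le_mul_of_nonneg_left
                (mul_le_mul_of_nonneg_left hkey (by positivity)) (by positivity)
          _ = (Fintype.card G : ℝ)⁻¹ * ∑ x : G, ‖v x‖ ^ 2 := by
              rw [← mul_assoc (((2*s)⁻¹:ℝ)^2), e2, one_mul]
          _ ≤ (Fintype.card G : ℝ)⁻¹ * (Fintype.card G : ℝ) := by
              exact mul_le_mul_of_nonneg_left hv2 (by positivity)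
          _ = 1 := inv_mul_cancel₀ hN.ne'
      calc l2normG (convC g v) ≤ Real.sqrt 1 := Real.sqrt_le_sqrt hle
        _ = 1 := Real.sqrt_one
    -- value of the inner product
    have hval : innerG (indC A) g = ((3 * (2*s)⁻¹ : ℝ) : ℂ) := by
      have hconj : ∀ t : G, (starRingEnd ℂ) (g t) = g t := by
        intro t
        simp [hg, map_mul, map_sub, map_add, map_inv₀, map_ofNat, Complex.conj_ofReal, apply_ite (starRingEnd ℂ)]
      have hA1 : indC A a = 1 := by simp [indC, Set.indicator_of_mem ha]
      have hB1 : indC A b = 1 := by simp [indC, Set.indicator_of_mem hb]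
      have hC1 : indC A c = 1 := by simp [indC, Set.indicator_of_mem hc]
      have hD0 : indC A d = 0 := by simp [indC, Set.indicator_of_notMem hd]
      have hre : ∀ t : G, indC A t * g t = (Fintype.card G : ℂ) * ((((2*s)⁻¹ : ℝ) : ℂ) *
          (indC A t * ((if t = a then 1 else 0) + (if t = b then 1 else 0)
            + (if t = c then 1 else 0) - (if t = d then 1 else 0)))) := by
        intro t; simp only [hg]; ring
      have hsum2 : ∑ t : G, indC A t * ((if t = a then (1:ℂ) else 0) + (if t = b then 1 else 0)
            + (if t = c then 1 else 0) - (if t = d then 1 else 0)) = 3 := by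
        simp only [mul_add, mul_sub, mul_ite, mul_one, mul_zero, Finset.sum_add_distrib,
          Finset.sum_sub_distrib, Finset.sum_ite_eq', Finset.mem_univ, if_true,
          hA1, hB1, hC1, hD0]
        norm_num
      simp only [innerG]
      rw [Finset.sum_congr rfl fun t _ => by rw [hconj t, hre t]]
      rw [← Finset.mul_sum, ← Finset.mul_sum, inv_mul_cancel_left₀ hNC, hsum2]
      push_cast
      ring
    -- the Anorm set is bounded above
    have hAb : BddAbove {r : ℝ | ∃ g0 : G → ℂ, PMnorm g0 ≤ 1 ∧ r = ‖innerG (indC A) g0‖} := by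
      refine ⟨(Fintype.card G : ℝ), ?_⟩
      rintro r ⟨g0, hg0, rfl⟩
      have hb := abs_le_of_PMnorm_le_one g0 hg0
      have hind : ∀ t : G, ‖indC A t‖ ≤ 1 := by
        intro t
        by_cases ht : t ∈ A <;> simp [indC, Set.indicator_of_mem, Set.indicator_of_notMem, ht]
      have h1 : ‖∑ t : G, indC A t * (starRingEnd ℂ) (g0 t)‖
          ≤ ∑ t : G, (Fintype.card G : ℝ) := by
        refine (norm_sum_le _ _).trans (Finset.sum_le_sum fun t _ => ?_)
        rw [norm_mul, Complex.norm_conj]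
        calc ‖indC A t‖ * ‖g0 t‖
            ≤ 1 * (Fintype.card G : ℝ) :=
              mul_le_mul (hind t) (hb t) (norm_nonneg _) zero_le_one
          _ = (Fintype.card G : ℝ) := one_mul _
      have h2 : (∑ _t : G, (Fintype.card G : ℝ)) = (Fintype.card G : ℝ) * (Fintype.card G : ℝ) := by
        rw [Finset.sum_const, Finset.card_univ, nsmul_eq_mul]
      rw [innerG, norm_mul, norm_inv, Complex.norm_natCast]
      calc (Fintype.card G : ℝ)⁻¹ * ‖∑ t : G, indC A t * (starRingEnd ℂ) (g0 t)‖
          ≤ (Fintype.card G : ℝ)⁻¹ * ((Fintype.card G : ℝ) * (Fintype.card G : ℝ)) :=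
            mul_le_mul_of_nonneg_left (h1.trans_eq h2) (by positivity)
        _ = (Fintype.card G : ℝ) := by field_simp
    have hmem : (3 * (2*s)⁻¹ : ℝ) ∈
        {r : ℝ | ∃ g0 : G → ℂ, PMnorm g0 ≤ 1 ∧ r = ‖innerG (indC A) g0‖} :=
      ⟨g, hPM, by rw [hval, Complex.norm_real, Real.norm_eq_abs, abs_of_nonneg (by positivity)]⟩
    have hle2 : (3 * (2*s)⁻¹ : ℝ) ≤ Anorm (indC A) := le_csSup hAb hmem
    have hlt : (3 * (2*s)⁻¹ : ℝ) < 1 + 1/750 := lt_of_le_of_lt hle2 h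
    have h2s : (0:ℝ) < 2*s := by linarith
    rw [show (3 * (2*s)⁻¹:ℝ) = 3/(2*s) from by ring, div_lt_iff₀ h2s] at hlt
    nlinarith [hlt, hs2, hs0]
end
end

section
/- Explicit formula for the algebra norm: Let G be a finite group with |G| = N and let f : G → ℂ. Suppose v₁, …, v_N is an orthonormal basis of L²(μ_G) and s₁, …, s_N are nonnegative reals such that L_f*(L_f(v_i)) = s_i²·v_i for every 1 ≤ i ≤ N, where L_f* denotes the adjoint of L_f with respect to the inner product of L²(μ_G). Then ‖f‖_{A(G)} = ∑_{i=1}^N s_i. -/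
open scoped BigOperators Pointwise

noncomputable section

variable {G : Type*}

namespace ANormAux

open Finset
open scoped ComplexConjugate

variable {G : Type*} [Group G] [Fintype G]

lemma cardR_pos : (0:ℝ) < (Fintype.card G : ℝ) := by
  exact_mod_cast Fintype.card_pos

lemma cardC_ne_zero : ((Fintype.card G : ℂ)) ≠ 0 := by
  exact_mod_cast Fintype.card_ne_zero

lemma innerG_self (f : G → ℂ) :
    innerG f f = (((Fintype.card G : ℝ)⁻¹ * ∑ x, ‖f x‖ ^ 2 : ℝ) : ℂ) := by
  unfold innerG
  push_cast
  congr 1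
  refine Finset.sum_congr rfl fun x _ => ?_
  rw [Complex.mul_conj, ← Complex.sq_norm]
  push_cast
  ring

lemma l2normG_eq_sqrt_re (f : G → ℂ) : l2normG f = Real.sqrt (innerG f f).re := by
  rw [innerG_self, Complex.ofReal_re, l2normG]

lemma l2normG_nonneg (f : G → ℂ) : 0 ≤ l2normG f := Real.sqrt_nonneg _

lemma l2normG_sq (f : G → ℂ) : (l2normG f) ^ 2 = (innerG f f).re := by
  rw [l2normG_eq_sqrt_re, Real.sq_sqrt]
  rw [innerG_self, Complex.ofReal_re]
  positivity

lemma innerG_self_nonneg (f : G → ℂ) : 0 ≤ (innerG f f).re := by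
  rw [innerG_self, Complex.ofReal_re]; positivity

lemma eq_zero_of_innerG_self (f : G → ℂ) (h : innerG f f = 0) : f = 0 := by
  rw [innerG_self] at h
  have h' : (Fintype.card G : ℝ)⁻¹ * ∑ x, ‖f x‖ ^ 2 = 0 := by
    exact_mod_cast h
  have h2 : ∑ x : G, ‖f x‖ ^ 2 = 0 := by
    have := cardR_pos (G := G)
    field_simp at h'
    simpa using h'
  funext x
  have := (Finset.sum_eq_zero_iff_of_nonneg (fun i _ => by positivity)).mp h2 x (mem_univ x)
  simpa using this

lemma innerG_conj_symm (f g : G → ℂ) : innerG g f = conj (innerG f g) := by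
  unfold innerG
  rw [map_mul, map_sum]
  congr 1
  · simp
  · refine Finset.sum_congr rfl fun x _ => ?_
    rw [map_mul]
    simp [mul_comm]

end ANormAux
namespace ANormAux

open Finset
open scoped ComplexConjugate

variable {G : Type*} [Group G] [Fintype G]

lemma inv_mul_sqrt_mul {a b : ℝ} (ha : 0 ≤ a) (hb : 0 ≤ b) :
    (Fintype.card G : ℝ)⁻¹ * (Real.sqrt a * Real.sqrt b)
      = Real.sqrt ((Fintype.card G : ℝ)⁻¹ * a) * Real.sqrt ((Fintype.card G : ℝ)⁻¹ * b) := by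
  have hN : (0:ℝ) ≤ (Fintype.card G : ℝ)⁻¹ := by positivity
  rw [Real.sqrt_mul hN, Real.sqrt_mul hN]
  calc (Fintype.card G : ℝ)⁻¹ * (Real.sqrt a * Real.sqrt b)
      = (Real.sqrt (Fintype.card G : ℝ)⁻¹ * Real.sqrt (Fintype.card G : ℝ)⁻¹)
        * (Real.sqrt a * Real.sqrt b) := by rw [Real.mul_self_sqrt hN]
    _ = _ := by ring

/-- Cauchy-Schwarz for `innerG`. -/
lemma abs_innerG_le (f g : G → ℂ) :
    ‖innerG f g‖ ≤ l2normG f * l2normG g := by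
  have h1 : ‖innerG f g‖ ≤
      (Fintype.card G : ℝ)⁻¹ * ∑ x : G, ‖f x‖ * ‖g x‖ := by
    unfold innerG
    rw [norm_mul]
    gcongr
    · simp
    refine (norm_sum_le _ _).trans ?_
    refine Finset.sum_le_sum fun x _ => ?_
    rw [norm_mul]
    simp
  refine h1.trans ?_
  have h2 := Real.sum_mul_le_sqrt_mul_sqrt Finset.univ
      (fun x : G => ‖f x‖) (fun x => ‖g x‖)
  unfold l2normG
  have hN : (0:ℝ) ≤ (Fintype.card G : ℝ)⁻¹ := by positivity
  calc (Fintype.card G : ℝ)⁻¹ * ∑ x : G, ‖f x‖ * ‖g x‖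
      ≤ (Fintype.card G : ℝ)⁻¹ *
        (Real.sqrt (∑ x : G, ‖f x‖ ^ 2) *
         Real.sqrt (∑ x : G, ‖g x‖ ^ 2)) := by gcongr
    _ = _ := inv_mul_sqrt_mul (by positivity) (by positivity)

/-- Reindexing sums over the group. -/
lemma sum_reindex (x : G) (F : G → ℝ) : ∑ y : G, F (y⁻¹ * x) = ∑ z : G, F z := by
  apply Fintype.sum_equiv ((Equiv.inv G).trans (Equiv.mulRight x))
  intro y; rfl

lemma sum_reindexC (x : G) (F : G → ℂ) : ∑ y : G, F (y⁻¹ * x) = ∑ z : G, F z := by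
  apply Fintype.sum_equiv ((Equiv.inv G).trans (Equiv.mulRight x))
  intro y; rfl

/-- Pointwise bound on convolutions. -/
lemma abs_convC_le (f g : G → ℂ) (x : G) :
    ‖convC f g x‖ ≤ l2normG f * l2normG g := by
  have h1 : ‖convC f g x‖ ≤
      (Fintype.card G : ℝ)⁻¹ * ∑ y : G, ‖f y‖ * ‖g (y⁻¹ * x)‖ := by
    unfold convC
    rw [norm_mul]
    gcongr
    · simp
    refine (norm_sum_le _ _).trans ?_
    refine Finset.sum_le_sum fun y _ => ?_
    rw [norm_mul]
  refine h1.trans ?_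
  have h2 := Real.sum_mul_le_sqrt_mul_sqrt Finset.univ
      (fun y : G => ‖f y‖) (fun y => ‖g (y⁻¹ * x)‖)
  have h3 : ∑ y : G, ‖g (y⁻¹ * x)‖ ^ 2 = ∑ z : G, ‖g z‖ ^ 2 :=
    sum_reindex x (fun z => ‖g z‖ ^ 2)
  unfold l2normG
  have hN : (0:ℝ) ≤ (Fintype.card G : ℝ)⁻¹ := by positivity
  calc (Fintype.card G : ℝ)⁻¹ * ∑ y : G, ‖f y‖ * ‖g (y⁻¹ * x)‖
      ≤ (Fintype.card G : ℝ)⁻¹ *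
        (Real.sqrt (∑ y : G, ‖f y‖ ^ 2) *
         Real.sqrt (∑ y : G, ‖g (y⁻¹ * x)‖ ^ 2)) := by gcongr
    _ = _ := by rw [h3]; exact inv_mul_sqrt_mul (by positivity) (by positivity)

/-- Submultiplicativity of the `L²` norm under convolution. -/
lemma l2normG_convC_le (f g : G → ℂ) :
    l2normG (convC f g) ≤ l2normG f * l2normG g := by
  have hM : 0 ≤ l2normG f * l2normG g := mul_nonneg (l2normG_nonneg f) (l2normG_nonneg g)
  rw [l2normG]
  rw [show l2normG f * l2normG g = Real.sqrt ((l2normG f * l2normG g)^2) by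
    rw [Real.sqrt_sq hM]]
  apply Real.sqrt_le_sqrt
  calc (Fintype.card G : ℝ)⁻¹ * ∑ x : G, ‖convC f g x‖ ^ 2
      ≤ (Fintype.card G : ℝ)⁻¹ * ∑ x : G, (l2normG f * l2normG g) ^ 2 := by
        have hN : (0:ℝ) ≤ (Fintype.card G : ℝ)⁻¹ := by positivity
        refine mul_le_mul_of_nonneg_left (Finset.sum_le_sum fun x _ => ?_) hN
        exact pow_le_pow_left₀ (by positivity) (abs_convC_le f g x) 2
    _ = (l2normG f * l2normG g) ^ 2 := by
        rw [Finset.sum_const, card_univ, nsmul_eq_mul]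
        rw [← mul_assoc, inv_mul_cancel₀ (by exact_mod_cast Fintype.card_ne_zero), one_mul]

end ANormAux
namespace ANormAux

open Finset
open scoped ComplexConjugate

variable {G : Type*} [Group G] [Fintype G]

/-- Associativity of convolution. -/
lemma convC_assoc (a b c : G → ℂ) : convC (convC a b) c = convC a (convC b c) := by
  funext x
  have key : ∀ z : G, ∑ y : G, b (z⁻¹ * y) * c (y⁻¹ * x)
      = ∑ w : G, b w * c (w⁻¹ * (z⁻¹ * x)) := by
    intro z
    apply Fintype.sum_equiv (Equiv.mulLeft z).symm
    intro y
    simp only [Equiv.mulLeft_symm_apply]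
    congr 1
    congr 1
    group
  unfold convC
  simp only [Finset.mul_sum, Finset.sum_mul]
  rw [Finset.sum_comm]
  refine Finset.sum_congr rfl fun z _ => ?_
  calc ∑ x1 : G, (Fintype.card G:ℂ)⁻¹ * ((Fintype.card G:ℂ)⁻¹ * (a z * b (z⁻¹ * x1)) * c (x1⁻¹ * x))
      = ((Fintype.card G:ℂ)⁻¹ * (Fintype.card G:ℂ)⁻¹ * a z)
        * ∑ x1 : G, b (z⁻¹ * x1) * c (x1⁻¹ * x) := by
        rw [Finset.mul_sum]
        exact Finset.sum_congr rfl fun _ _ => by ring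
    _ = ((Fintype.card G:ℂ)⁻¹ * (Fintype.card G:ℂ)⁻¹ * a z)
        * ∑ i : G, b i * c (i⁻¹ * (z⁻¹ * x)) := by rw [key z]
    _ = _ := by
        rw [Finset.mul_sum]
        exact Finset.sum_congr rfl fun _ _ => by ring

/-- The identity of the convolution algebra. -/
def deltaC (G : Type*) [Group G] [Fintype G] [DecidableEq G] : G → ℂ :=
  fun x => if x = 1 then (Fintype.card G : ℂ) else 0

lemma convC_delta [DecidableEq G] (w : G → ℂ) : convC (deltaC G) w = w := by
  funext x
  unfold convC deltaC
  rw [Finset.sum_eq_single (1 : G)]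
  · rw [if_pos rfl, inv_one, one_mul, ← mul_assoc,
      inv_mul_cancel₀ (cardC_ne_zero (G := G)), one_mul]
  · intro y _ hy
    rw [if_neg hy, zero_mul]
  · simp

lemma convC_add_right (a w u : G → ℂ) :
    convC a (fun x => w x + u x) = fun x => convC a w x + convC a u x := by
  funext x
  unfold convC
  rw [← mul_add, ← Finset.sum_add_distrib]
  congr 1
  refine Finset.sum_congr rfl fun y _ => ?_
  ring

lemma convC_smul_right (a : G → ℂ) (c : ℂ) (w : G → ℂ) :
    convC a (fun x => c * w x) = fun x => c * convC a w x := by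
  funext x
  unfold convC
  rw [Finset.mul_sum, Finset.mul_sum, Finset.mul_sum]
  refine Finset.sum_congr rfl fun y _ => ?_
  ring

lemma convC_smul_left (c : ℂ) (p w : G → ℂ) :
    convC (fun x => c * p x) w = fun x => c * convC p w x := by
  funext x
  unfold convC
  rw [Finset.mul_sum, Finset.mul_sum, Finset.mul_sum]
  refine Finset.sum_congr rfl fun y _ => ?_
  ring

lemma convC_sum_right {ι : Type*} (a : G → ℂ) (t : Finset ι) (w : ι → G → ℂ) :
    convC a (fun x => ∑ i ∈ t, w i x) = fun x => ∑ i ∈ t, convC a (w i) x := by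
  classical
  induction t using Finset.induction with
  | empty => funext x; simp [convC]
  | insert j t' hni ih =>
      funext x
      rw [show (fun x => ∑ i ∈ insert j t', w i x)
          = (fun x => w j x + ∑ i ∈ t', w i x) by
        funext y; rw [Finset.sum_insert hni]]
      rw [convC_add_right, ih]
      simp [Finset.sum_insert hni]

lemma convC_sum_left {ι : Type*} (t : Finset ι) (p : ι → G → ℂ) (w : G → ℂ) :
    convC (fun x => ∑ i ∈ t, p i x) w = fun x => ∑ i ∈ t, convC (p i) w x := by
  funext x
  unfold convC
  simp_rw [Finset.sum_mul]
  rw [Finset.sum_comm, Finset.mul_sum]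

lemma mul_mul_sum_helper (c1 c2 cc : ℂ) (S : G → ℂ) :
    c1 * ((c2 * ∑ y : G, S y) * cc) = ∑ y : G, c1 * c2 * (S y * cc) := by
  rw [show c1 * ((c2 * ∑ y : G, S y) * cc) = (c1 * c2 * cc) * ∑ y : G, S y from by ring,
    Finset.mul_sum]
  exact Finset.sum_congr rfl fun _ _ => by ring

lemma mul_mul_sum_helper' (c1 c2 cc : ℂ) (S : G → ℂ) :
    c1 * (cc * (c2 * ∑ y : G, S y)) = ∑ y : G, c1 * c2 * (cc * S y) := by
  rw [show c1 * (cc * (c2 * ∑ y : G, S y)) = (c1 * c2 * cc) * ∑ y : G, S y from by ring,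
    Finset.mul_sum]
  exact Finset.sum_congr rfl fun _ _ => by ring

/-- The adjoint function. -/
def adjC (f : G → ℂ) : G → ℂ := fun y => conj (f y⁻¹)

lemma innerG_conv_adj (f w u : G → ℂ) :
    innerG (convC f w) u = innerG w (convC (adjC f) u) := by
  calc innerG (convC f w) u
      = ∑ x : G, ∑ y : G, (Fintype.card G:ℂ)⁻¹ * (Fintype.card G:ℂ)⁻¹
          * (f y * w (y⁻¹ * x) * conj (u x)) := by
        unfold innerG convC
        rw [Finset.mul_sum]
        refine Finset.sum_congr rfl fun x _ => ?_
        rw [mul_mul_sum_helper]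
    _ = ∑ y : G, ∑ x : G, (Fintype.card G:ℂ)⁻¹ * (Fintype.card G:ℂ)⁻¹
          * (f y * w (y⁻¹ * x) * conj (u x)) := Finset.sum_comm
    _ = ∑ y : G, ∑ z : G, (Fintype.card G:ℂ)⁻¹ * (Fintype.card G:ℂ)⁻¹
          * (f y * w z * conj (u (y * z))) := by
        refine Finset.sum_congr rfl fun y _ => ?_
        apply Fintype.sum_equiv (Equiv.mulLeft y).symm
        intro x
        simp only [Equiv.mulLeft_symm_apply]
        rw [mul_inv_cancel_left]
    _ = ∑ y : G, ∑ z : G, (Fintype.card G:ℂ)⁻¹ * (Fintype.card G:ℂ)⁻¹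
          * (w z * f y * conj (u (y * z))) := by
        refine Finset.sum_congr rfl fun y _ => Finset.sum_congr rfl fun z _ => by ring
    _ = ∑ z : G, ∑ y : G, (Fintype.card G:ℂ)⁻¹ * (Fintype.card G:ℂ)⁻¹
          * (w z * f y * conj (u (y * z))) := Finset.sum_comm
    _ = ∑ z : G, ∑ t : G, (Fintype.card G:ℂ)⁻¹ * (Fintype.card G:ℂ)⁻¹
          * (w z * f t⁻¹ * conj (u (t⁻¹ * z))) := by
        refine Finset.sum_congr rfl fun z _ => ?_
        exact (Fintype.sum_equiv (Equiv.inv G) _ _ fun t => rfl).symm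
    _ = innerG w (convC (adjC f) u) := by
        symm
        unfold innerG convC adjC
        rw [Finset.mul_sum]
        refine Finset.sum_congr rfl fun z _ => ?_
        rw [map_mul, map_inv₀, Complex.conj_natCast, map_sum, mul_mul_sum_helper']
        refine Finset.sum_congr rfl fun t _ => ?_
        rw [map_mul, Complex.conj_conj]
        ring

end ANormAux
namespace ANormAux

open Finset Matrix
open scoped ComplexConjugate

variable {G : Type*} [Group G] [Fintype G]

/-- Completeness of an orthonormal family of maximal size. -/
lemma completeness [DecidableEq G] (v : Fin (Fintype.card G) → G → ℂ)
    (hortho : ∀ i j, innerG (v i) (v j) = if i = j then 1 else 0) (x y : G) :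
    ∑ i, v i x * conj (v i y) = if x = y then (Fintype.card G : ℂ) else 0 := by
  classical
  set e : Fin (Fintype.card G) ≃ G := (Fintype.equivFin G).symm with he
  set A : Matrix (Fin (Fintype.card G)) (Fin (Fintype.card G)) ℂ :=
    Matrix.of (fun i j => v i (e j)) with hA
  have hmul : A * ((Fintype.card G : ℂ)⁻¹ • Aᴴ) = 1 := by
    ext i j
    have h1 : (A * ((Fintype.card G : ℂ)⁻¹ • Aᴴ)) i j
        = (Fintype.card G : ℂ)⁻¹ * ∑ k, v i (e k) * conj (v j (e k)) := by
      simp [Matrix.mul_apply, hA, Matrix.conjTranspose_apply, Finset.mul_sum]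
      exact Finset.sum_congr rfl fun k _ => by ring
    rw [h1]
    have h2 : ∑ k, v i (e k) * conj (v j (e k)) = ∑ x : G, v i x * conj (v j x) :=
      Fintype.sum_equiv e _ _ (fun k => rfl)
    rw [h2]
    have h3 := hortho i j
    unfold innerG at h3
    rw [h3]
    simp [Matrix.one_apply]
  have hmul2 : ((Fintype.card G : ℂ)⁻¹ • Aᴴ) * A = 1 := mul_eq_one_comm.mp hmul
  have key : ∀ a b : Fin (Fintype.card G),
      ∑ i, conj (v i (e a)) * v i (e b) = if a = b then (Fintype.card G : ℂ) else 0 := by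
    intro a b
    have h4 : (((Fintype.card G : ℂ)⁻¹ • Aᴴ) * A) a b
        = (Fintype.card G : ℂ)⁻¹ * ∑ i, conj (v i (e a)) * v i (e b) := by
      simp [Matrix.mul_apply, hA, Matrix.conjTranspose_apply, Finset.mul_sum]
      exact Finset.sum_congr rfl fun k _ => by ring
    rw [hmul2, Matrix.one_apply] at h4
    have h5 : (Fintype.card G : ℂ) * ((Fintype.card G : ℂ)⁻¹
        * ∑ i, conj (v i (e a)) * v i (e b))
        = (Fintype.card G : ℂ) * (if a = b then 1 else 0) := by rw [← h4]
    rw [← mul_assoc, mul_inv_cancel₀ (cardC_ne_zero (G := G)), one_mul] at h5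
    rw [h5]
    split <;> simp
  have keyxy : ∑ i, conj (v i x) * v i y = if x = y then (Fintype.card G : ℂ) else 0 := by
    have h6 := key (e.symm x) (e.symm y)
    simp only [Equiv.apply_symm_apply] at h6
    rw [h6]
    by_cases hxy : x = y
    · rw [if_pos (by rw [hxy]), if_pos hxy]
    · rw [if_neg (fun hc => hxy (e.symm.injective hc)), if_neg hxy]
  calc ∑ i, v i x * conj (v i y)
      = conj (∑ i, conj (v i x) * v i y) := by
        rw [map_sum]
        exact Finset.sum_congr rfl fun i _ => by simp [mul_comm]
    _ = _ := by
        rw [keyxy]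
        split <;> simp

end ANormAux
namespace ANormAux

open Finset
open scoped ComplexConjugate

variable {G : Type*} [Group G] [Fintype G]

lemma innerG_sum_left {ι : Type*} [Fintype ι] (c : ι → ℂ) (p : ι → G → ℂ) (u : G → ℂ) :
    innerG (fun x => ∑ i, c i * p i x) u = ∑ i, c i * innerG (p i) u := by
  unfold innerG
  rw [Finset.mul_sum]
  rw [show ∑ i, c i * ((Fintype.card G:ℂ)⁻¹ * ∑ x, p i x * conj (u x))
      = ∑ i, ∑ x, (Fintype.card G:ℂ)⁻¹ * (c i * (p i x * conj (u x))) from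
    Finset.sum_congr rfl fun i _ => by
      rw [Finset.mul_sum, Finset.mul_sum]
      exact Finset.sum_congr rfl fun x _ => by ring]
  rw [Finset.sum_comm]
  refine Finset.sum_congr rfl fun x _ => ?_
  rw [Finset.sum_mul, Finset.mul_sum]
  exact Finset.sum_congr rfl fun i _ => by ring

lemma innerG_sum_right {ι : Type*} [Fintype ι] (c : ι → ℂ) (p : ι → G → ℂ) (u : G → ℂ) :
    innerG u (fun x => ∑ i, c i * p i x) = ∑ i, conj (c i) * innerG u (p i) := by
  rw [innerG_conj_symm, innerG_sum_left, map_sum]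
  refine Finset.sum_congr rfl fun i _ => ?_
  rw [map_mul, ← innerG_conj_symm]

/-- Expansion in an orthonormal basis. -/
lemma sum_helper3 (c d : ℂ) (S : G → ℂ) : (c * ∑ a : G, S a) * d = ∑ a : G, c * S a * d := by
  rw [Finset.mul_sum, Finset.sum_mul]

lemma expansion (v : Fin (Fintype.card G) → G → ℂ)
    (hortho : ∀ i j, innerG (v i) (v j) = if i = j then 1 else 0) (w : G → ℂ) (x : G) :
    ∑ i, innerG w (v i) * v i x = w x := by
  classical
  calc ∑ i, innerG w (v i) * v i x
      = ∑ i, ∑ a, (Fintype.card G:ℂ)⁻¹ * (w a * conj (v i a)) * v i x := by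
        refine Finset.sum_congr rfl fun i _ => ?_
        unfold innerG
        rw [sum_helper3]
    _ = ∑ a, ∑ i, (Fintype.card G:ℂ)⁻¹ * (w a * conj (v i a)) * v i x := Finset.sum_comm
    _ = ∑ a, (Fintype.card G:ℂ)⁻¹ * w a * ∑ i, v i x * conj (v i a) := by
        refine Finset.sum_congr rfl fun a _ => ?_
        rw [Finset.mul_sum]
        exact Finset.sum_congr rfl fun i _ => by ring
    _ = ∑ a, (Fintype.card G:ℂ)⁻¹ * w a * (if x = a then (Fintype.card G : ℂ) else 0) := by
        refine Finset.sum_congr rfl fun a _ => ?_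
        rw [completeness v hortho]
    _ = ∑ a, (if x = a then (Fintype.card G:ℂ)⁻¹ * w a * (Fintype.card G : ℂ) else 0) :=
        Finset.sum_congr rfl fun a _ => by split <;> simp
    _ = (Fintype.card G:ℂ)⁻¹ * w x * (Fintype.card G : ℂ) := by
        rw [Finset.sum_ite_eq]
        simp
    _ = w x := by
        have := cardC_ne_zero (G := G)
        field_simp

/-- Parseval. -/
lemma parseval (v : Fin (Fintype.card G) → G → ℂ)
    (hortho : ∀ i j, innerG (v i) (v j) = if i = j then 1 else 0) (w : G → ℂ) :
    ∑ i, innerG w (v i) * conj (innerG w (v i)) = innerG w w := by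
  have hfun : (fun x => ∑ i, innerG w (v i) * v i x) = w := funext (expansion v hortho w)
  calc ∑ i, innerG w (v i) * conj (innerG w (v i))
      = ∑ i, innerG w (v i) * innerG (v i) w :=
        Finset.sum_congr rfl fun i _ => by rw [innerG_conj_symm w (v i)]
    _ = innerG (fun x => ∑ i, innerG w (v i) * v i x) w := (innerG_sum_left _ _ _).symm
    _ = innerG w w := by rw [hfun]

end ANormAux
namespace ANormAux

open Finset
open scoped ComplexConjugate

variable {G : Type*} [Group G] [Fintype G]

lemma sum_helper4 (c : ℂ) (S1 S2 : G → ℂ) :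
    c * ((c * ∑ a : G, S1 a) * (c * ∑ b : G, S2 b))
      = ∑ a : G, ∑ b : G, c * c * c * (S1 a * S2 b) := by
  calc c * ((c * ∑ a : G, S1 a) * (c * ∑ b : G, S2 b))
      = (c * c * c * ∑ a : G, S1 a) * (∑ b : G, S2 b) := by ring
    _ = (∑ a : G, c * c * c * S1 a) * (∑ b : G, S2 b) := by
        congr 1
        exact Finset.mul_sum _ _ _
    _ = ∑ a : G, ∑ b : G, (c * c * c * S1 a) * S2 b :=
        Finset.sum_mul_sum Finset.univ Finset.univ _ _
    _ = _ := Finset.sum_congr rfl fun a _ => Finset.sum_congr rfl fun b _ => by ring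

/-- The trace identity: `⟨f,g⟩ = ∑ i ⟨f ∗ vᵢ, g ∗ vᵢ⟩` for an orthonormal basis `v`. -/
lemma trace_identity (v : Fin (Fintype.card G) → G → ℂ)
    (hortho : ∀ i j, innerG (v i) (v j) = if i = j then 1 else 0) (f g : G → ℂ) :
    innerG f g = ∑ i, innerG (convC f (v i)) (convC g (v i)) := by
  classical
  symm
  set c : ℂ := (Fintype.card G : ℂ)⁻¹ with hc
  calc ∑ i, innerG (convC f (v i)) (convC g (v i))
      = ∑ i, ∑ x, ∑ a, ∑ b, c * c * c
          * ((f a * v i (a⁻¹ * x)) * (conj (g b) * conj (v i (b⁻¹ * x)))) := by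
        refine Finset.sum_congr rfl fun i _ => ?_
        unfold innerG convC
        rw [Finset.mul_sum]
        refine Finset.sum_congr rfl fun x _ => ?_
        rw [map_mul, map_inv₀, Complex.conj_natCast, map_sum]
        rw [show ∑ y : G, conj (g y * v i (y⁻¹ * x))
            = ∑ y : G, conj (g y) * conj (v i (y⁻¹ * x)) from
          Finset.sum_congr rfl fun y _ => by rw [map_mul]]
        exact sum_helper4 c _ _
    _ = ∑ x, ∑ a, ∑ b, ∑ i, c * c * c
          * ((f a * v i (a⁻¹ * x)) * (conj (g b) * conj (v i (b⁻¹ * x)))) := by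
        rw [Finset.sum_comm]
        refine Finset.sum_congr rfl fun x _ => ?_
        rw [Finset.sum_comm]
        refine Finset.sum_congr rfl fun a _ => ?_
        rw [Finset.sum_comm]
    _ = ∑ x, ∑ a, ∑ b, (c * c * c) * (f a * conj (g b))
          * (∑ i, v i (a⁻¹ * x) * conj (v i (b⁻¹ * x))) := by
        refine Finset.sum_congr rfl fun x _ => Finset.sum_congr rfl fun a _ =>
          Finset.sum_congr rfl fun b _ => ?_
        rw [Finset.mul_sum]
        exact Finset.sum_congr rfl fun i _ => by ring
    _ = ∑ x, ∑ a, ∑ b, (if a = b then (c * c * c) * (f a * conj (g b))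
          * (Fintype.card G : ℂ) else 0) := by
        refine Finset.sum_congr rfl fun x _ => Finset.sum_congr rfl fun a _ =>
          Finset.sum_congr rfl fun b _ => ?_
        rw [completeness v hortho]
        have : (a⁻¹ * x = b⁻¹ * x) = (a = b) := by
          rw [mul_left_inj, inv_inj]
        rw [this]
        split <;> simp
    _ = ∑ x, ∑ a, (c * c * c) * (f a * conj (g a)) * (Fintype.card G : ℂ) := by
        refine Finset.sum_congr rfl fun x _ => Finset.sum_congr rfl fun a _ => ?_
        rw [Finset.sum_ite_eq univ a]
        simp
    _ = innerG f g := by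
        rw [Finset.sum_const, card_univ, nsmul_eq_mul]
        unfold innerG
        rw [Finset.mul_sum, Finset.mul_sum]
        refine Finset.sum_congr rfl fun a _ => ?_
        rw [hc]
        have hN := cardC_ne_zero (G := G)
        field_simp

end ANormAux
namespace ANormAux

open Finset
open scoped ComplexConjugate

variable {G : Type*} [Group G] [Fintype G]

lemma innerG_smul_left (c : ℂ) (p w : G → ℂ) :
    innerG (fun x => c * p x) w = c * innerG p w := by
  unfold innerG
  rw [Finset.mul_sum, Finset.mul_sum, Finset.mul_sum]
  exact Finset.sum_congr rfl fun x _ => by ring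

lemma innerG_smul_right (c : ℂ) (w u : G → ℂ) :
    innerG w (fun x => c * u x) = conj c * innerG w u := by
  unfold innerG
  rw [Finset.mul_sum, Finset.mul_sum, Finset.mul_sum]
  refine Finset.sum_congr rfl fun x _ => ?_
  rw [map_mul]
  ring

lemma innerG_sub_left (a b w : G → ℂ) :
    innerG (fun x => a x - b x) w = innerG a w - innerG b w := by
  unfold innerG
  rw [← mul_sub, ← Finset.sum_sub_distrib]
  congr 1
  exact Finset.sum_congr rfl fun x _ => by ring

lemma l2_conv_le_PMnorm (g w : G → ℂ) (hw : l2normG w ≤ 1) :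
    l2normG (convC g w) ≤ PMnorm g := by
  apply le_csSup
  · refine ⟨l2normG g, ?_⟩
    rintro r ⟨w', hw', rfl⟩
    calc l2normG (convC g w') ≤ l2normG g * l2normG w' := l2normG_convC_le g w'
      _ ≤ l2normG g * 1 := by
          exact mul_le_mul_of_nonneg_left hw' (l2normG_nonneg g)
      _ = l2normG g := mul_one _
  · exact ⟨w, hw, rfl⟩

lemma PMnorm_le_one (g : G → ℂ)
    (h : ∀ w, l2normG w ≤ 1 → l2normG (convC g w) ≤ 1) : PMnorm g ≤ 1 := by
  apply Real.sSup_le _ zero_le_one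
  rintro r ⟨w, hw, rfl⟩
  exact h w hw

/-- Convolution powers. -/
def convPow [DecidableEq G] (h : G → ℂ) : ℕ → G → ℂ
  | 0 => deltaC G
  | (n+1) => convC h (convPow h n)

end ANormAux
namespace ANormAux

open Finset
open scoped ComplexConjugate

variable {G : Type*} [Group G] [Fintype G]

section Main

variable (f : G → ℂ) (v : Fin (Fintype.card G) → G → ℂ) (s : Fin (Fintype.card G) → ℝ)

/-- The eigenvector property `L_{f† ∗ f} vᵢ = sᵢ² vᵢ`. -/
lemma eig (hadj : ∀ i, ∀ w : G → ℂ,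
      innerG (convC f w) (convC f (v i)) = ((s i : ℂ)) ^ 2 * innerG w (v i))
    (i : Fin (Fintype.card G)) :
    convC (convC (adjC f) f) (v i) = fun x => ((s i : ℂ)) ^ 2 * v i x := by
  set z : G → ℂ := fun x => convC (convC (adjC f) f) (v i) x - ((s i : ℂ)) ^ 2 * v i x with hz
  have key : ∀ w : G → ℂ, innerG z w = 0 := by
    intro w
    rw [hz, innerG_sub_left, innerG_smul_left]
    have h1 : innerG (convC (convC (adjC f) f) (v i)) w
        = ((s i : ℂ)) ^ 2 * innerG (v i) w := by
      have h2 := hadj i w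
      rw [innerG_conv_adj f w (convC f (v i)), ← convC_assoc] at h2
      -- h2 : innerG w (convC (convC (adjC f) f) (v i)) = s² * innerG w (v i)
      have h3 := congrArg conj h2
      rw [← innerG_conj_symm, map_mul, ← innerG_conj_symm] at h3
      rw [h3]
      congr 1
      rw [show ((s i : ℂ))^2 = (((s i)^2 : ℝ) : ℂ) by push_cast; ring]
      exact Complex.conj_ofReal _
    rw [h1]
    ring
  have hzz : z = 0 := eq_zero_of_innerG_self z (key z)
  funext x
  have := congrFun hzz x
  rw [hz] at this
  simpa [sub_eq_zero] using this

lemma eig_pow [DecidableEq G] (hadj : ∀ i, ∀ w : G → ℂ,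
      innerG (convC f w) (convC f (v i)) = ((s i : ℂ)) ^ 2 * innerG w (v i))
    (n : ℕ) (i : Fin (Fintype.card G)) :
    convC (convPow (convC (adjC f) f) n) (v i)
      = fun x => (((s i : ℂ)) ^ 2) ^ n * v i x := by
  induction n with
  | zero =>
      rw [convPow, convC_delta]
      funext x
      rw [pow_zero, one_mul]
  | succ n ih =>
      rw [convPow, convC_assoc, ih, convC_smul_right, eig f v s hadj i]
      funext x
      rw [pow_succ]
      ring

end Main

end ANormAux
open Finset ANormAux
open scoped ComplexConjugate

/-- Explicit formula for the algebra norm: `‖f‖_{A(G)}` is the sum of the singular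
values of `L_f`.  Here `v` is an orthonormal basis of `L²(μ_G)` diagonalizing
`L_f* ∘ L_f` (the adjoint condition is expressed via the inner product) with
eigenvalues `(s i)²`. -/
theorem algebra_norm_explicit_formula {G : Type*} [Group G] [Fintype G] (f : G → ℂ)
    (v : Fin (Fintype.card G) → G → ℂ) (s : Fin (Fintype.card G) → ℝ)
    (hortho : ∀ i j, innerG (v i) (v j) = if i = j then 1 else 0)
    (hs : ∀ i, 0 ≤ s i)
    (hadj : ∀ i, ∀ w : G → ℂ,
      innerG (convC f w) (convC f (v i)) = ((s i : ℂ)) ^ 2 * innerG w (v i)) :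
    Anorm f = ∑ i, s i := by
  classical
  have hu_inner : ∀ i j, innerG (convC f (v j)) (convC f (v i))
      = ((s i : ℂ)) ^ 2 * (if j = i then 1 else 0) := fun i j => by
    rw [hadj i (v j), hortho j i]
  have hu_zero : ∀ i, s i = 0 → convC f (v i) = 0 := by
    intro i hi
    apply eq_zero_of_innerG_self
    rw [hu_inner i i, hi]
    simp
  have hnorm_u : ∀ i, l2normG (convC f (v i)) = s i := by
    intro i
    rw [l2normG_eq_sqrt_re, hu_inner i i, if_pos rfl, mul_one]
    rw [show ((s i : ℂ)) ^ 2 = (((s i) ^ 2 : ℝ) : ℂ) by push_cast; ring, Complex.ofReal_re]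
    exact Real.sqrt_sq (hs i)
  have hv_norm : ∀ i, l2normG (v i) = 1 := by
    intro i
    rw [l2normG_eq_sqrt_re, hortho i i, if_pos rfl]
    simp
  have hsum_nonneg : 0 ≤ ∑ i, s i := Finset.sum_nonneg fun i _ => hs i
  -- upper bound
  have hupper : ∀ g : G → ℂ, PMnorm g ≤ 1 → ‖innerG f g‖ ≤ ∑ i, s i := by
    intro g hg
    rw [trace_identity v hortho f g]
    refine (norm_sum_le _ _).trans ?_
    refine Finset.sum_le_sum fun i _ => ?_
    calc ‖innerG (convC f (v i)) (convC g (v i))‖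
        ≤ l2normG (convC f (v i)) * l2normG (convC g (v i)) := abs_innerG_le _ _
      _ ≤ s i * 1 := by
          refine mul_le_mul (hnorm_u i).le
            ((l2_conv_le_PMnorm g (v i) (hv_norm i).le).trans hg)
            (l2normG_nonneg _) (hs i)
      _ = s i := mul_one _
  -- construction of the optimal g
  set h : G → ℂ := convC (adjC f) f with hh
  set T : Finset ℝ := (Finset.univ.filter (fun i => s i ≠ 0)).image (fun i => s i ^ 2) with hT
  set q : Polynomial ℝ := Lagrange.interpolate T id (fun t => (Real.sqrt t)⁻¹) with hq
  have hqeval : ∀ i, s i ≠ 0 → Polynomial.eval (s i ^ 2) q = (s i)⁻¹ := by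
    intro i hi
    have hmem : s i ^ 2 ∈ T :=
      Finset.mem_image.mpr ⟨i, Finset.mem_filter.mpr ⟨Finset.mem_univ i, hi⟩, rfl⟩
    have h5 := Lagrange.eval_interpolate_at_node (s := T) (v := id)
      (fun t => (Real.sqrt t)⁻¹) (Set.injOn_id _) hmem
    rw [hq]
    simpa [Real.sqrt_sq (hs i)] using h5
  set P : G → ℂ := fun x => ∑ k ∈ Finset.range (q.natDegree + 1),
    ((q.coeff k : ℝ) : ℂ) * convPow h k x with hP
  set g0 : G → ℂ := convC f P with hg0
  have hP_act : ∀ i, convC P (v i)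
      = fun x => ((Polynomial.eval ((s i) ^ 2) q : ℝ) : ℂ) * v i x := by
    intro i
    rw [hP, convC_sum_left]
    funext x
    have hterm : ∑ k ∈ Finset.range (q.natDegree + 1),
          convC (fun y => ((q.coeff k : ℝ) : ℂ) * convPow h k y) (v i) x
        = ∑ k ∈ Finset.range (q.natDegree + 1),
          ((q.coeff k : ℝ) : ℂ) * ((((s i : ℂ)) ^ 2) ^ k * v i x) := by
      refine Finset.sum_congr rfl fun k _ => ?_
      rw [convC_smul_left (((q.coeff k : ℝ) : ℂ)) (convPow h k) (v i), hh,
        eig_pow f v s hadj k i]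
    rw [hterm]
    rw [Polynomial.eval_eq_sum_range]
    push_cast
    rw [Finset.sum_mul]
    exact Finset.sum_congr rfl fun k _ => by ring
  have hg0_act : ∀ i, convC g0 (v i)
      = fun x => (((s i)⁻¹ : ℝ) : ℂ) * convC f (v i) x := by
    intro i
    rw [hg0, convC_assoc, hP_act i, convC_smul_right]
    by_cases hsi : s i = 0
    · funext x
      rw [show convC f (v i) = 0 from hu_zero i hsi]
      simp
    · rw [hqeval i hsi]
  -- PM norm of g0
  have hg0_PM : PMnorm g0 ≤ 1 := by
    apply PMnorm_le_one
    intro w hw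
    have hw_exp : convC g0 w = fun x => ∑ i,
        (innerG w (v i) * (((s i)⁻¹ : ℝ) : ℂ)) * convC f (v i) x := by
      conv_lhs => rw [show w = fun x => ∑ i, innerG w (v i) * v i x from
        funext fun x => (expansion v hortho w x).symm]
      rw [convC_sum_right g0 Finset.univ (fun i => fun x => innerG w (v i) * v i x)]
      funext x
      refine Finset.sum_congr rfl fun i _ => ?_
      rw [show (fun y => innerG w (v i) * v i y) = fun y => innerG w (v i) * v i y from rfl]
      rw [convC_smul_right g0 (innerG w (v i)) (v i), hg0_act i]
      ring
    have hre : (innerG (convC g0 w) (convC g0 w)).re ≤ (innerG w w).re := by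
      rw [hw_exp, innerG_sum_left]
      have hstep : ∀ i, (innerG w (v i) * (((s i)⁻¹ : ℝ) : ℂ))
          * innerG (convC f (v i)) (fun x => ∑ j,
            (innerG w (v j) * (((s j)⁻¹ : ℝ) : ℂ)) * convC f (v j) x)
          = ((Complex.normSq (innerG w (v i)) * ((s i)⁻¹ * s i) ^ 2 : ℝ) : ℂ) := by
        intro i
        rw [innerG_sum_right]
        have hterm1 : ∑ j, conj (innerG w (v j) * (((s j)⁻¹ : ℝ) : ℂ))
              * innerG (convC f (v i)) (convC f (v j))
            = ∑ j, conj (innerG w (v j) * (((s j)⁻¹ : ℝ) : ℂ))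
              * (((s j : ℂ)) ^ 2 * (if i = j then 1 else 0)) := by
          refine Finset.sum_congr rfl fun j _ => ?_
          rw [hu_inner j i]
        have hterm2 : (∑ j, conj (innerG w (v j) * (((s j)⁻¹ : ℝ) : ℂ))
              * (((s j : ℂ)) ^ 2 * (if i = j then 1 else 0)))
            = ∑ j, if i = j then conj (innerG w (v j) * (((s j)⁻¹ : ℝ) : ℂ))
              * ((s j : ℂ)) ^ 2 else 0 := by
          refine Finset.sum_congr rfl fun j _ => ?_
          split <;> simp
        rw [hterm1, hterm2]
        rw [Finset.sum_ite_eq Finset.univ i, if_pos (Finset.mem_univ i)]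
        rw [map_mul, Complex.conj_ofReal]
        rw [show innerG w (v i) * (((s i)⁻¹ : ℝ) : ℂ)
            * (conj (innerG w (v i)) * (((s i)⁻¹ : ℝ) : ℂ) * ((s i : ℂ)) ^ 2)
            = (innerG w (v i) * conj (innerG w (v i)))
              * ((((s i)⁻¹ : ℝ) : ℂ) * (((s i)⁻¹ : ℝ) : ℂ) * ((s i : ℂ)) ^ 2) from by ring]
        rw [Complex.mul_conj]
        push_cast
        ring
      rw [Finset.sum_congr rfl (fun i _ => hstep i)]
      rw [← parseval v hortho w]
      have hterm3 : ∑ i, innerG w (v i) * conj (innerG w (v i))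
          = ∑ i, ((Complex.normSq (innerG w (v i)) : ℝ) : ℂ) :=
        Finset.sum_congr rfl fun i _ => Complex.mul_conj (innerG w (v i))
      rw [hterm3]
      rw [← Complex.ofReal_sum, ← Complex.ofReal_sum, Complex.ofReal_re, Complex.ofReal_re]
      refine Finset.sum_le_sum fun i _ => ?_
      by_cases hsi : s i = 0
      · rw [hsi]
        simp [Complex.normSq_nonneg]
      · rw [inv_mul_cancel₀ hsi, one_pow, mul_one]
    rw [l2normG_eq_sqrt_re]
    have hle1 : (innerG w w).re ≤ 1 := by
      have := l2normG_sq w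
      nlinarith [l2normG_nonneg w]
    exact Real.sqrt_le_one.mpr (hre.trans hle1)
  -- value of the inner product
  have hval : innerG f g0 = ((∑ i, s i : ℝ) : ℂ) := by
    rw [trace_identity v hortho f g0]
    have hterm4 : ∑ i, innerG (convC f (v i)) (convC g0 (v i))
        = ∑ i, (((s i)⁻¹ : ℝ) : ℂ) * ((s i : ℂ)) ^ 2 := by
      refine Finset.sum_congr rfl fun i _ => ?_
      rw [hg0_act i, innerG_smul_right, Complex.conj_ofReal, hu_inner i i, if_pos rfl, mul_one]
    rw [hterm4]
    rw [Complex.ofReal_sum]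
    refine Finset.sum_congr rfl fun i _ => ?_
    by_cases hsi : s i = 0
    · rw [hsi]; simp
    · have hne : (s i : ℂ) ≠ 0 := by exact_mod_cast hsi
      push_cast
      rw [sq, ← mul_assoc, inv_mul_cancel₀ hne, one_mul]
  -- conclusion
  have hub : ∀ r ∈ {r : ℝ | ∃ g : G → ℂ, PMnorm g ≤ 1 ∧ r = ‖innerG f g‖},
      r ≤ ∑ i, s i := by
    rintro r ⟨g, hg, rfl⟩
    exact hupper g hg
  have hmem : (∑ i, s i) ∈ {r : ℝ | ∃ g : G → ℂ, PMnorm g ≤ 1 ∧ r = ‖innerG f g‖} :=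
    ⟨g0, hg0_PM, by rw [hval, Complex.norm_real, Real.norm_eq_abs, abs_of_nonneg hsum_nonneg]⟩
  exact le_antisymm (Real.sSup_le hub hsum_nonneg) (le_csSup ⟨_, hub⟩ hmem)
end
end

section
/- Suppose that G is a finite group and A is a nonempty subset of G. Then ‖1_{A⁻¹}∗μ_A‖_{A(G)} = 1, where A⁻¹ = { a⁻¹ : a ∈ A }. -/
open scoped BigOperators Pointwise

noncomputable section

variable {G : Type*}

set_option linter.unusedSectionVars false

section Lemmas
variable [Group G] [Fintype G]

lemma cardG_pos : (0:ℝ) < (Fintype.card G : ℝ) := by exact_mod_cast Fintype.card_pos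

lemma l2_nonneg (f : G → ℂ) : 0 ≤ l2normG f := Real.sqrt_nonneg _

lemma l2_le_of_forall (f : G → ℂ) (M : ℝ) (hM : 0 ≤ M)
    (h : ∀ x, ‖f x‖ ≤ M) : l2normG f ≤ M := by
  have hpos : (0:ℝ) < (Fintype.card G : ℝ) := cardG_pos
  have h1 : ∑ x : G, ‖f x‖ ^ 2 ≤ (Fintype.card G : ℝ) * M ^ 2 := by
    calc ∑ x : G, ‖f x‖ ^ 2 ≤ ∑ _x : G, M ^ 2 :=
          Finset.sum_le_sum (fun x _ => by
            have hx := h x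
            have := norm_nonneg (f x)
            nlinarith)
      _ = (Fintype.card G : ℝ) * M ^ 2 := by
          rw [Finset.sum_const, Finset.card_univ, nsmul_eq_mul]
  have h2 : (Fintype.card G : ℝ)⁻¹ * ∑ x : G, ‖f x‖ ^ 2 ≤ M ^ 2 := by
    rw [inv_mul_le_iff₀ hpos]
    exact h1
  calc l2normG f ≤ Real.sqrt (M ^ 2) := Real.sqrt_le_sqrt h2
    _ = M := Real.sqrt_sq hM

lemma abs_le_sqrt_mul_l2 (f : G → ℂ) (x : G) :
    ‖f x‖ ≤ Real.sqrt (Fintype.card G) * l2normG f := by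
  have h1 : ‖f x‖ ^ 2 ≤ ∑ y : G, ‖f y‖ ^ 2 :=
    Finset.single_le_sum (f := fun y => ‖f y‖ ^ 2) (fun y _ => sq_nonneg _)
      (Finset.mem_univ x)
  have hpos : (0:ℝ) < (Fintype.card G : ℝ) := cardG_pos
  calc ‖f x‖ = Real.sqrt (‖f x‖ ^ 2) :=
        (Real.sqrt_sq (norm_nonneg _)).symm
    _ ≤ Real.sqrt (∑ y : G, ‖f y‖ ^ 2) := Real.sqrt_le_sqrt h1
    _ = Real.sqrt (Fintype.card G) * l2normG f := by
        rw [l2normG, ← Real.sqrt_mul hpos.le]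
        congr 1
        field_simp

lemma abs_innerG_le (f g : G → ℂ) :
    ‖innerG f g‖ ≤ l2normG f * l2normG g := by
  have hpos : (0:ℝ) < (Fintype.card G : ℝ) := cardG_pos
  have h1 : ‖innerG f g‖ ≤
      (Fintype.card G : ℝ)⁻¹ * ∑ x : G, ‖f x‖ * ‖g x‖ := by
    rw [innerG]
    calc ‖(Fintype.card G : ℂ)⁻¹ * ∑ x : G, f x * (starRingEnd ℂ) (g x)‖
        = (Fintype.card G : ℝ)⁻¹ * ‖∑ x : G, f x * (starRingEnd ℂ) (g x)‖ := by
          rw [norm_mul, norm_inv, Complex.norm_natCast]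
      _ ≤ (Fintype.card G : ℝ)⁻¹ * ∑ x : G, ‖f x‖ * ‖g x‖ := by
          gcongr
          calc ‖∑ x : G, f x * (starRingEnd ℂ) (g x)‖ ≤
              ∑ x : G, ‖f x * (starRingEnd ℂ) (g x)‖ :=
                (norm_sum_le _ _)
            _ = ∑ x : G, ‖f x‖ * ‖g x‖ := by
                simp [norm_mul, Complex.norm_conj]
  have h2 : ∑ x : G, ‖f x‖ * ‖g x‖ ≤
      Real.sqrt (∑ x : G, ‖f x‖ ^ 2) *
        Real.sqrt (∑ x : G, ‖g x‖ ^ 2) :=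
    Real.sum_mul_le_sqrt_mul_sqrt _ _ _
  have h3 : l2normG f * l2normG g =
      (Fintype.card G : ℝ)⁻¹ * (Real.sqrt (∑ x : G, ‖f x‖ ^ 2) *
        Real.sqrt (∑ x : G, ‖g x‖ ^ 2)) := by
    rw [l2normG, l2normG, Real.sqrt_mul (by positivity), Real.sqrt_mul (by positivity)]
    have hs : Real.sqrt ((Fintype.card G : ℝ)⁻¹) * Real.sqrt ((Fintype.card G : ℝ)⁻¹)
        = (Fintype.card G : ℝ)⁻¹ := Real.mul_self_sqrt (by positivity)
    calc (Real.sqrt ((Fintype.card G : ℝ)⁻¹) * Real.sqrt (∑ x : G, ‖f x‖ ^ 2)) *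
          (Real.sqrt ((Fintype.card G : ℝ)⁻¹) * Real.sqrt (∑ x : G, ‖g x‖ ^ 2))
        = (Real.sqrt ((Fintype.card G : ℝ)⁻¹) * Real.sqrt ((Fintype.card G : ℝ)⁻¹)) *
          (Real.sqrt (∑ x : G, ‖f x‖ ^ 2) *
            Real.sqrt (∑ x : G, ‖g x‖ ^ 2)) := by ring
      _ = _ := by rw [hs]
  rw [h3]
  refine h1.trans ?_
  exact mul_le_mul_of_nonneg_left h2 (by positivity)


lemma l2_smul (c : ℂ) (f : G → ℂ) :
    l2normG (fun x => c * f x) = ‖c‖ * l2normG f := by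
  unfold l2normG
  have : ∀ x : G, ‖c * f x‖ ^ 2 = ‖c‖ ^ 2 * ‖f x‖ ^ 2 := by
    intro x; rw [norm_mul]; ring
  simp only [this, ← Finset.mul_sum]
  rw [show (Fintype.card G : ℝ)⁻¹ * (‖c‖ ^ 2 * ∑ x : G, ‖f x‖ ^ 2)
      = ‖c‖ ^ 2 * ((Fintype.card G : ℝ)⁻¹ * ∑ x : G, ‖f x‖ ^ 2) by ring,
    Real.sqrt_mul (sq_nonneg _), Real.sqrt_sq (norm_nonneg _)]

lemma convC_smul (g w : G → ℂ) (c : ℂ) :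
    convC g (fun x => c * w x) = fun x => c * convC g w x := by
  funext x
  unfold convC
  rw [show (∑ y : G, g y * (c * w (y⁻¹ * x))) = c * ∑ y : G, g y * w (y⁻¹ * x) by
    rw [Finset.mul_sum]; exact Finset.sum_congr rfl (fun y _ => by ring)]
  ring

lemma l2_eq_zero (f : G → ℂ) (h : l2normG f = 0) : f = 0 := by
  have hpos : (0:ℝ) < (Fintype.card G : ℝ) := cardG_pos
  have hnn : 0 ≤ ∑ x : G, ‖f x‖ ^ 2 :=
    Finset.sum_nonneg (fun x _ => sq_nonneg _)
  have h1 : (Fintype.card G : ℝ)⁻¹ * ∑ x : G, ‖f x‖ ^ 2 ≤ 0 :=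
    Real.sqrt_eq_zero'.mp h
  have h2 : ∑ x : G, ‖f x‖ ^ 2 = 0 := by
    have : 0 ≤ (Fintype.card G : ℝ)⁻¹ * ∑ x : G, ‖f x‖ ^ 2 := by positivity
    have h3 : (Fintype.card G : ℝ)⁻¹ * ∑ x : G, ‖f x‖ ^ 2 = 0 := le_antisymm h1 this
    have h4 : (Fintype.card G : ℝ)⁻¹ ≠ 0 := by positivity
    exact (mul_eq_zero.mp h3).resolve_left h4
  funext x
  have h5 : ‖f x‖ ^ 2 = 0 := by
    have := (Finset.sum_eq_zero_iff_of_nonneg (fun x _ => sq_nonneg (‖f x‖))).mp h2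
    exact this x (Finset.mem_univ x)
  have : ‖f x‖ = 0 := by
    have := sq_eq_zero_iff.mp h5; exact this
  simpa using norm_eq_zero.mp this

lemma convC_zero (g : G → ℂ) : convC g (0 : G → ℂ) = 0 := by
  funext x; simp [convC]

lemma l2_zero : l2normG (0 : G → ℂ) = 0 := by
  simp [l2normG]

lemma PM_bddAbove (g : G → ℂ) :
    BddAbove {r : ℝ | ∃ v : G → ℂ, l2normG v ≤ 1 ∧ r = l2normG (convC g v)} := by
  refine ⟨(Fintype.card G : ℝ)⁻¹ * (Real.sqrt (Fintype.card G) * ∑ y : G, ‖g y‖), ?_⟩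
  rintro r ⟨v, hv, rfl⟩
  have hpos : (0:ℝ) < (Fintype.card G : ℝ) := cardG_pos
  refine l2_le_of_forall _ _ (by positivity) (fun x => ?_)
  calc ‖convC g v x‖
      = ‖(Fintype.card G : ℂ)⁻¹ * ∑ y : G, g y * v (y⁻¹ * x)‖ := rfl
    _ ≤ (Fintype.card G : ℝ)⁻¹ * ∑ y : G, ‖g y‖ * ‖v (y⁻¹ * x)‖ := by
        rw [norm_mul, norm_inv, Complex.norm_natCast]
        gcongr
        exact (norm_sum_le _ _).trans (le_of_eq (by simp [norm_mul]))
    _ ≤ (Fintype.card G : ℝ)⁻¹ * ∑ y : G, ‖g y‖ * Real.sqrt (Fintype.card G) := by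
        refine mul_le_mul_of_nonneg_left (Finset.sum_le_sum (fun y _ => ?_)) (by positivity)
        refine mul_le_mul_of_nonneg_left ?_ (norm_nonneg _)
        calc ‖v (y⁻¹ * x)‖ ≤ Real.sqrt (Fintype.card G) * l2normG v :=
              abs_le_sqrt_mul_l2 v _
          _ ≤ Real.sqrt (Fintype.card G) * 1 :=
              mul_le_mul_of_nonneg_left hv (Real.sqrt_nonneg _)
          _ = Real.sqrt (Fintype.card G) := mul_one _
    _ = (Fintype.card G : ℝ)⁻¹ * (Real.sqrt (Fintype.card G) * ∑ y : G, ‖g y‖) := by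
        rw [← Finset.sum_mul]; ring

lemma PM_le_one_conv (g : G → ℂ) (hg : PMnorm g ≤ 1) (w : G → ℂ) :
    l2normG (convC g w) ≤ l2normG w := by
  by_cases h0 : l2normG w = 0
  · rw [l2_eq_zero w h0, convC_zero]
  · have hwpos : 0 < l2normG w := lt_of_le_of_ne (l2_nonneg w) (Ne.symm h0)
    set c : ℝ := l2normG w
    set v : G → ℂ := fun x => ((c⁻¹ : ℝ) : ℂ) * w x with hv
    have hv1 : l2normG v = 1 := by
      rw [hv, l2_smul]
      rw [Complex.norm_real, Real.norm_eq_abs, abs_of_pos (by positivity)]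
      field_simp
      rfl
    have hmem : l2normG (convC g v) ∈
        {r : ℝ | ∃ v : G → ℂ, l2normG v ≤ 1 ∧ r = l2normG (convC g v)} :=
      ⟨v, le_of_eq hv1, rfl⟩
    have hle : l2normG (convC g v) ≤ PMnorm g := le_csSup (PM_bddAbove g) hmem
    have hle1 : l2normG (convC g v) ≤ 1 := hle.trans hg
    have hconv : convC g v = fun x => ((c⁻¹ : ℝ) : ℂ) * convC g w x := convC_smul g w _
    rw [hconv, l2_smul, Complex.norm_real, Real.norm_eq_abs, abs_of_pos (by positivity)] at hle1
    calc l2normG (convC g w) = c * (c⁻¹ * l2normG (convC g w)) := by field_simp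
      _ ≤ c * 1 := by gcongr
      _ = c := mul_one c


lemma innerG_conv_swap (u v g : G → ℂ) :
    innerG (convC u v) g =
      (starRingEnd ℂ) (innerG (convC g (fun t => (starRingEnd ℂ) (v t⁻¹))) u) := by
  simp only [innerG, convC, map_mul, map_sum, map_inv₀, Complex.conj_conj, map_natCast,
    mul_inv_rev, inv_inv]
  congr 1
  have hL : ∀ x : G,
      ((Fintype.card G : ℂ)⁻¹ * ∑ y : G, u y * v (y⁻¹ * x)) * (starRingEnd ℂ) (g x)
      = ∑ y : G, (Fintype.card G : ℂ)⁻¹ * (u y * v (y⁻¹ * x) * (starRingEnd ℂ) (g x)) := by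
    intro x
    rw [Finset.mul_sum, Finset.sum_mul]
    exact Finset.sum_congr rfl fun y _ => by ring
  have hR : ∀ x : G,
      ((Fintype.card G : ℂ)⁻¹ * ∑ y : G, (starRingEnd ℂ) (g y) * v (x⁻¹ * y)) * u x
      = ∑ y : G, (Fintype.card G : ℂ)⁻¹ * (u x * v (x⁻¹ * y) * (starRingEnd ℂ) (g y)) := by
    intro x
    rw [Finset.mul_sum, Finset.sum_mul]
    exact Finset.sum_congr rfl fun y _ => by ring
  simp only [hL, hR]
  exact Finset.sum_comm


lemma sum_sq_indC (A : Set G) : ∑ x : G, ‖indC A x‖ ^ 2 = (Nat.card A : ℝ) := by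
  classical
  have h : ∀ x : G, ‖indC A x‖ ^ 2 = if x ∈ A then (1:ℝ) else 0 := by
    intro x
    by_cases h : x ∈ A <;> simp [indC, Set.indicator_apply, h]
  rw [Finset.sum_congr rfl (fun x _ => h x), Finset.sum_boole,
    Nat.card_eq_fintype_card, Fintype.card_subtype]

lemma sum_indC (A : Set G) : ∑ x : G, indC A x = (Nat.card A : ℂ) := by
  classical
  have h : ∀ x : G, indC A x = if x ∈ A then (1:ℂ) else 0 := by
    intro x
    by_cases h : x ∈ A <;> simp [indC, Set.indicator_apply, h]
  rw [Finset.sum_congr rfl (fun x _ => h x), Finset.sum_boole,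
    Nat.card_eq_fintype_card, Fintype.card_subtype]

lemma ncard_inv_eq (A : Set G) : Nat.card (A⁻¹ : Set G) = Nat.card A := by
  rw [← Set.image_inv_eq_inv]
  exact Nat.card_image_of_injective inv_injective A

end Lemmas

/-- `‖1_{A⁻¹} ∗ μ_A‖_{A(G)} = 1` for every nonempty `A ⊆ G`. -/
theorem Anorm_conv_inv_indicator_mu {G : Type*} [Group G] [Fintype G]
    (A : Set G) (hA : A.Nonempty) :
    Anorm (convC (indC A⁻¹) (muC A)) = 1 := by
  classical
  have hn : (0:ℝ) < (Fintype.card G : ℝ) := cardG_pos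
  have hnC : (Fintype.card G : ℂ) ≠ 0 := by exact_mod_cast hn.ne'
  have : Nonempty (A : Set G) := hA.to_subtype
  have hk : 0 < Nat.card A := Nat.card_pos
  have hkC : (Nat.card A : ℂ) ≠ 0 := by exact_mod_cast hk.ne'
  set u : G → ℂ := indC (A⁻¹ : Set G) with hu
  set v : G → ℂ := muC A with hv
  set w : G → ℂ := fun t => (starRingEnd ℂ) (v t⁻¹) with hw
  set f : G → ℂ := convC u v with hf
  -- (a) product of norms is 1
  have hprod : l2normG w * l2normG u = 1 := by
    have h1 : ∑ x : G, ‖u x‖ ^ 2 = (Nat.card A : ℝ) := by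
      rw [hu, sum_sq_indC, ncard_inv_eq]
    have h2 : ∑ x : G, ‖w x‖ ^ 2
        = ((Fintype.card G : ℝ) / (Nat.card A : ℝ)) ^ 2 * (Nat.card A : ℝ) := by
      have hterm : ∀ x : G, ‖w x‖ ^ 2
          = ((Fintype.card G : ℝ) / (Nat.card A : ℝ)) ^ 2 * ‖indC (A⁻¹ : Set G) x‖ ^ 2 := by
        intro x
        have hmem : x⁻¹ ∈ A ↔ x ∈ (A⁻¹ : Set G) := (Set.mem_inv).symm
        have hind : indC A x⁻¹ = indC (A⁻¹ : Set G) x := by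
          by_cases h : x ∈ (A⁻¹ : Set G)
          · simp [indC, Set.indicator_apply, h, hmem.mpr h]
          · have h2 : x⁻¹ ∉ A := fun hh => h (hmem.mp hh)
            simp [indC, Set.indicator_apply, h, h2]
        rw [hw]
        simp only [hv, muC, map_mul, norm_mul, Complex.norm_conj]
        rw [hind, norm_div, Complex.norm_natCast, Complex.norm_natCast]
        ring
      rw [Finset.sum_congr rfl (fun x _ => hterm x), ← Finset.mul_sum, sum_sq_indC, ncard_inv_eq]
    have key : ∀ a b : ℝ, a ≠ 0 → b ≠ 0 → a⁻¹ * ((a / b) ^ 2 * b) * (a⁻¹ * b) = 1 := by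
      intro a b ha hb; field_simp
    rw [l2normG, l2normG, h1, h2, ← Real.sqrt_mul (by positivity),
      key (Fintype.card G : ℝ) (Nat.card A : ℝ) hn.ne' (by exact_mod_cast hk.ne'),
      Real.sqrt_one]
  -- (b) upper bound
  have hupper : ∀ g : G → ℂ, PMnorm g ≤ 1 → ‖innerG f g‖ ≤ 1 := by
    intro g hg
    rw [hf, innerG_conv_swap u v g, Complex.norm_conj]
    calc ‖innerG (convC g w) u‖ ≤ l2normG (convC g w) * l2normG u :=
          abs_innerG_le _ _
      _ ≤ l2normG w * l2normG u :=
          mul_le_mul_of_nonneg_right (PM_le_one_conv g hg w) (l2_nonneg u)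
      _ = 1 := hprod
  -- (c) the witness g₀
  set g₀ : G → ℂ := fun x => if x = 1 then (Fintype.card G : ℂ) else 0 with hg₀
  have hconv_id : ∀ p : G → ℂ, convC g₀ p = p := by
    intro p
    funext x
    rw [convC]
    rw [show (∑ y : G, g₀ y * p (y⁻¹ * x))
        = ∑ y : G, (if y = 1 then (Fintype.card G : ℂ) * p (y⁻¹ * x) else 0) by
      exact Finset.sum_congr rfl fun y _ => by by_cases hy : y = 1 <;> simp [hg₀, hy]]
    rw [Finset.sum_ite_eq' Finset.univ (1 : G) (fun y => (Fintype.card G : ℂ) * p (y⁻¹ * x))]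
    simp [hnC]
  have hPMg₀ : PMnorm g₀ ≤ 1 := by
    rw [PMnorm]
    apply csSup_le
    · exact ⟨l2normG (convC g₀ 0), 0, by rw [l2_zero]; exact zero_le_one, rfl⟩
    · rintro r ⟨p, hp, rfl⟩
      rw [hconv_id p]; exact hp
  have hf1 : f 1 = 1 := by
    rw [hf, convC]
    have hterm : ∀ y : G, u y * v (y⁻¹ * 1)
        = ((Fintype.card G : ℂ) / (Nat.card A : ℂ)) * indC (A⁻¹ : Set G) y := by
      intro y
      rw [mul_one, hu, hv, muC]
      have hind : indC A y⁻¹ = indC (A⁻¹ : Set G) y := by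
        by_cases h : y ∈ (A⁻¹ : Set G)
        · simp [indC, Set.indicator_apply, h, Set.mem_inv.mp h]
        · have h2 : y⁻¹ ∉ A := fun hh => h (Set.mem_inv.mpr hh)
          simp [indC, Set.indicator_apply, h, h2]
      have hsq : indC (A⁻¹ : Set G) y * indC (A⁻¹ : Set G) y = indC (A⁻¹ : Set G) y := by
        by_cases h : y ∈ (A⁻¹ : Set G) <;> simp [indC, Set.indicator_apply, h]
      rw [hind]
      calc indC (A⁻¹ : Set G) y * ((Fintype.card G : ℂ) / (Nat.card A : ℂ) * indC (A⁻¹ : Set G) y)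
          = ((Fintype.card G : ℂ) / (Nat.card A : ℂ)) * (indC (A⁻¹ : Set G) y * indC (A⁻¹ : Set G) y) := by ring
        _ = _ := by rw [hsq]
    rw [Finset.sum_congr rfl (fun y _ => hterm y), ← Finset.mul_sum, sum_indC]
    rw [show ((Nat.card (A⁻¹ : Set G) : ℂ)) = (Nat.card A : ℂ) by exact_mod_cast congrArg Nat.cast (ncard_inv_eq A)]
    rw [div_mul_cancel₀ _ hkC, inv_mul_cancel₀ hnC]
  have hinner : ‖innerG f g₀‖ = 1 := by
    rw [innerG]
    rw [show (∑ x : G, f x * (starRingEnd ℂ) (g₀ x))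
        = ∑ x : G, (if x = 1 then f x * (starRingEnd ℂ) (Fintype.card G : ℂ) else 0) by
      exact Finset.sum_congr rfl fun x _ => by by_cases hx : x = 1 <;> simp [hg₀, hx]]
    rw [Finset.sum_ite_eq' Finset.univ (1 : G) (fun x => f x * (starRingEnd ℂ) (Fintype.card G : ℂ))]
    simp [hf1, hnC, Complex.conj_natCast]
  -- conclude
  have hmem : (1:ℝ) ∈ {r : ℝ | ∃ g : G → ℂ, PMnorm g ≤ 1 ∧ r = ‖innerG f g‖} :=
    ⟨g₀, hPMg₀, hinner.symm⟩
  have hub : ∀ r ∈ {r : ℝ | ∃ g : G → ℂ, PMnorm g ≤ 1 ∧ r = ‖innerG f g‖}, r ≤ 1 := by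
    rintro r ⟨g, hg, rfl⟩; exact hupper g hg
  rw [Anorm]
  exact le_antisymm (csSup_le ⟨1, hmem⟩ hub) (le_csSup ⟨1, hub⟩ hmem)
end
end

section
/- Fournier-type lemma: Suppose that G is a finite group, A ⊆ G is nonempty, c ∈ [0,1] is such that ‖1_A∗1_{A⁻¹}‖²_{L²(μ_G)} ≥ (1−c)·μ_G(A)³, and η is a real parameter with 0 < η, 12c ≤ η and η < 1/12. Then there is a subgroup H ≤ G and some x ∈ G such that μ_G(H) ≥ (1 − c·η⁻¹)·μ_G(A) and μ_G(A ∩ Hx) ≥ (1 − 2η)·μ_G(H). -/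
open scoped BigOperators Pointwise

noncomputable section

variable {G : Type*}

set_option linter.unusedSectionVars false

namespace FournierAux

open Finset

variable {G : Type*} [Group G] [Fintype G] [DecidableEq G]

variable (A : Set G) [DecidablePred (· ∈ A)]

/-- The finset of elements of `A`. -/
def AF : Finset G := Finset.univ.filter (fun y => y ∈ A)

/-- `cnt A x = |A ∩ xA|`. -/
def cnt (x : G) : ℕ := (AF A ∩ x • AF A).card

variable {A}

lemma mem_AF {y : G} : y ∈ AF A ↔ y ∈ A := by simp [AF]

lemma mem_smul_AF {x y : G} : y ∈ x • AF A ↔ x⁻¹ * y ∈ A := by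
  rw [← Finset.inv_smul_mem_iff, smul_eq_mul, mem_AF]

lemma cnt_le (x : G) : cnt A x ≤ (AF A).card :=
  Finset.card_le_card (Finset.inter_subset_left)

lemma cnt_one : cnt A 1 = (AF A).card := by
  simp [cnt]

lemma cnt_inv (x : G) : cnt A x⁻¹ = cnt A x := by
  have h : x • (AF A ∩ x⁻¹ • AF A) = x • AF A ∩ AF A := by
    rw [Finset.smul_finset_inter, smul_inv_smul]
  have hc := Finset.card_smul_finset x (AF A ∩ x⁻¹ • AF A)
  rw [h] at hc
  rw [cnt, cnt, ← hc, Finset.inter_comm]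

lemma cnt_mul (x y : G) : cnt A x + cnt A y ≤ (AF A).card + cnt A (x * y) := by
  have h2 : x • (AF A ∩ y • AF A) = x • AF A ∩ (x * y) • AF A := by
    rw [Finset.smul_finset_inter, smul_smul]
  calc cnt A x + cnt A y
      = (AF A ∩ x • AF A).card + (x • (AF A ∩ y • AF A)).card := by
        rw [Finset.card_smul_finset]; rfl
    _ = ((AF A ∩ x • AF A) ∪ (x • AF A ∩ (x*y) • AF A)).card
        + ((AF A ∩ x • AF A) ∩ (x • AF A ∩ (x*y) • AF A)).card := by
        rw [h2, Finset.card_union_add_card_inter]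
    _ ≤ (x • AF A).card + cnt A (x * y) := by
        refine Nat.add_le_add (Finset.card_le_card ?_) (Finset.card_le_card ?_)
        · exact Finset.union_subset (Finset.inter_subset_right)
            (Finset.inter_subset_left)
        · intro z hz
          simp only [cnt, Finset.mem_inter] at hz ⊢
          exact ⟨hz.1.1, hz.2.2⟩
    _ = (AF A).card + cnt A (x * y) := by rw [Finset.card_smul_finset]

lemma cnt_filter (x : G) :
    AF A ∩ x • AF A = Finset.univ.filter (fun y => y ∈ A ∧ x⁻¹ * y ∈ A) := by
  ext y
  simp [mem_AF, mem_smul_AF]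


lemma indR_apply {y : G} : indR A y = if y ∈ A then (1:ℝ) else 0 :=
  Set.indicator_apply _ _ _

lemma cnt_eq_sum (x : G) :
    (cnt A x : ℝ) = ∑ y : G, indR A y * indR A (x⁻¹ * y) := by
  rw [cnt, cnt_filter, Finset.card_filter]
  push_cast
  refine Finset.sum_congr rfl fun y _ => ?_
  by_cases h1 : y ∈ A <;> by_cases h2 : x⁻¹ * y ∈ A <;>
    simp [indR_apply, h1, h2]

lemma sum_indR : ∑ y : G, indR A y = ((AF A).card : ℝ) := by
  rw [AF, Finset.card_filter]
  push_cast
  refine Finset.sum_congr rfl fun y _ => ?_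
  by_cases h : y ∈ A <;> simp [indR_apply, h]

lemma conv_eq (x : G) :
    convR (indR A) (indR A⁻¹) x = (Fintype.card G : ℝ)⁻¹ * cnt A x := by
  rw [convR, cnt_eq_sum]
  congr 1
  refine Finset.sum_congr rfl fun y _ => ?_
  congr 1
  have hiff : (y⁻¹ * x ∈ A⁻¹) ↔ (x⁻¹ * y ∈ A) := by
    rw [Set.mem_inv, mul_inv_rev, inv_inv]
  by_cases h : x⁻¹ * y ∈ A
  · simp [indR, Set.indicator_apply, h, hiff.2 h]
  · simp [indR, Set.indicator_apply, h, fun hh => h (hiff.1 hh)]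

lemma sum_cnt : ∑ x : G, (cnt A x : ℝ) = ((AF A).card : ℝ) ^ 2 := by
  have hshift : ∀ y : G, ∑ x : G, indR A (x⁻¹ * y) = ((AF A).card : ℝ) := by
    intro y
    rw [← sum_indR (A := A)]
    exact Fintype.sum_equiv ((Equiv.inv G).trans (Equiv.mulRight y))
      (fun x => indR A (x⁻¹ * y)) (fun z => indR A z) (fun x => rfl)
  calc ∑ x : G, (cnt A x : ℝ) = ∑ x : G, ∑ y : G, indR A y * indR A (x⁻¹ * y) :=
        Finset.sum_congr rfl fun x _ => cnt_eq_sum x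
    _ = ∑ y : G, indR A y * (∑ x : G, indR A (x⁻¹ * y)) := by
        rw [Finset.sum_comm]
        exact Finset.sum_congr rfl fun y _ => (Finset.mul_sum _ _ _).symm
    _ = ∑ y : G, indR A y * ((AF A).card : ℝ) :=
        Finset.sum_congr rfl fun y _ => by rw [hshift y]
    _ = ((AF A).card : ℝ) ^ 2 := by rw [← Finset.sum_mul, sum_indR]; ring

end FournierAux

set_option maxHeartbeats 1600000 in
/-- Fournier-type lemma: a set whose multiplicative energy is very close to maximal
is almost a coset of a subgroup. -/
theorem fournier_lemma {G : Type*} [Group G] [Fintype G]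
    (A : Set G) (hA : A.Nonempty) (c : ℝ) (hc0 : 0 ≤ c) (hc1 : c ≤ 1)
    (hEnergy : (1 - c) * density A ^ 3 ≤
      (Fintype.card G : ℝ)⁻¹ * ∑ x : G, (convR (indR A) (indR A⁻¹) x) ^ 2)
    (η : ℝ) (hη0 : 0 < η) (hη1 : 12 * c ≤ η) (hη2 : η < 1 / 12) :
    ∃ (H : Subgroup G) (x : G),
      (1 - c * η⁻¹) * density A ≤ density (H : Set G) ∧
      (1 - 2 * η) * density (H : Set G) ≤
        density (A ∩ ((fun h => h * x) '' (H : Set G))) := by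
  classical
  obtain ⟨a0, ha0⟩ := hA
  set N : ℕ := Fintype.card G with hNdef
  have hN0 : 0 < (N : ℝ) := by exact_mod_cast Fintype.card_pos
  set α : ℝ := ((FournierAux.AF A).card : ℝ) with hαdef
  have hα0 : 0 < α := by
    have hne : (FournierAux.AF A).Nonempty := ⟨a0, FournierAux.mem_AF.2 ha0⟩
    rw [hαdef]; exact_mod_cast Finset.card_pos.2 hne
  have hAset : A = ↑(FournierAux.AF A) := by
    ext y; simp [FournierAux.mem_AF]
  have hAcard : (Nat.card A : ℝ) = α := by
    rw [Nat.card_coe_set_eq]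
    conv_lhs => rw [hAset]
    rw [Set.ncard_coe_finset]
  have hdA : density A = α / N := by rw [density, hAcard]
  set g : G → ℝ := fun x => ((FournierAux.cnt A x : ℕ) : ℝ) with hgdef
  have hg0 : ∀ x, 0 ≤ g x := fun x => Nat.cast_nonneg _
  have hgle : ∀ x, g x ≤ α := fun x => by
    simpa [hgdef, hαdef] using (Nat.cast_le (α := ℝ)).2 (FournierAux.cnt_le (A := A) x)
  have hg1 : g 1 = α := by
    simp only [hgdef, hαdef]; exact_mod_cast FournierAux.cnt_one (A := A)
  have hginv : ∀ x, g x⁻¹ = g x := fun x => by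
    simp only [hgdef]; exact_mod_cast FournierAux.cnt_inv (A := A) x
  have hgmul : ∀ x y, g x + g y ≤ α + g (x * y) := fun x y => by
    simp only [hgdef, hαdef]; exact_mod_cast FournierAux.cnt_mul (A := A) x y
  have hsum : ∑ x : G, g x = α ^ 2 := FournierAux.sum_cnt
  -- energy bound
  have hsq : (1 - c) * α ^ 3 ≤ ∑ x : G, g x ^ 2 := by
    have hE : (1 - c) * (α / N) ^ 3 ≤ (N : ℝ)⁻¹ * ∑ x : G, ((N : ℝ)⁻¹ * g x) ^ 2 := by
      have := hEnergy
      rw [hdA] at this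
      simpa only [FournierAux.conv_eq] using this
    have hE2 : (N : ℝ)⁻¹ * ∑ x : G, ((N : ℝ)⁻¹ * g x) ^ 2 = (∑ x : G, g x ^ 2) / N ^ 3 := by
      simp_rw [mul_pow]
      rw [← Finset.mul_sum, div_eq_mul_inv, ← inv_pow]
      ring
    have hE3 : ((1 - c) * α ^ 3) / N ^ 3 ≤ (∑ x : G, g x ^ 2) / N ^ 3 := by
      rw [← hE2]
      calc ((1 - c) * α ^ 3) / N ^ 3 = (1 - c) * (α / N) ^ 3 := by ring
        _ ≤ _ := hE
    have hN3 : (0 : ℝ) < (N : ℝ) ^ 3 := by positivity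
    have := mul_le_mul_of_nonneg_right hE3 hN3.le
    rwa [div_mul_cancel₀ _ (ne_of_gt hN3), div_mul_cancel₀ _ (ne_of_gt hN3)] at this
  have hggen : ∀ x, 0 ≤ g x * (α - g x) := fun x =>
    mul_nonneg (hg0 x) (by linarith [hgle x])
  have hD : ∑ x : G, g x * (α - g x) ≤ c * α ^ 3 := by
    have h1 : ∑ x : G, g x * (α - g x) = (∑ x : G, g x) * α - ∑ x : G, g x ^ 2 := by
      simp_rw [mul_sub, ← sq]
      rw [Finset.sum_sub_distrib, ← Finset.sum_mul]
    rw [h1, hsum]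
    nlinarith [hsq]
  -- the symmetry sets
  set B : Finset G := Finset.univ.filter (fun x => (1 - η) * α ≤ g x) with hBdef
  set S2 : Finset G := Finset.univ.filter (fun x => (1 - 2 * η) * α ≤ g x) with hS2def
  have hmemB : ∀ x, x ∈ B ↔ (1 - η) * α ≤ g x := fun x => by
    rw [hBdef]; simp
  have hmemS2 : ∀ x, x ∈ S2 ↔ (1 - 2 * η) * α ≤ g x := fun x => by
    rw [hS2def]; simp
  -- lower bound on the size of B
  have hU : η * (∑ x ∈ Bᶜ, g x) ≤ c * α ^ 2 := by
    have hpt : ∀ x ∈ Bᶜ, η * α * g x ≤ g x * (α - g x) := by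
      intro x hx
      rw [Finset.mem_compl, hmemB] at hx
      push_neg at hx
      nlinarith [hg0 x]
    have hUB : ∑ x ∈ Bᶜ, g x * (α - g x) ≤ c * α ^ 3 :=
      le_trans (Finset.sum_le_univ_sum_of_nonneg hggen) hD
    have hUs : η * α * (∑ x ∈ Bᶜ, g x) ≤ c * α ^ 3 := by
      rw [Finset.mul_sum]
      exact le_trans (Finset.sum_le_sum hpt) hUB
    have := le_of_mul_le_mul_right (by nlinarith [hUs] : (η * ∑ x ∈ Bᶜ, g x) * α ≤ (c * α ^ 2) * α) hα0
    exact this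
  have hBsum : ∑ x ∈ B, g x + ∑ x ∈ Bᶜ, g x = α ^ 2 := by
    rw [Finset.sum_add_sum_compl B g, hsum]
  have hBle : ∑ x ∈ B, g x ≤ (B.card : ℝ) * α := by
    have := Finset.sum_le_card_nsmul B g α (fun x _ => hgle x)
    rwa [nsmul_eq_mul] at this
  have hBcard : (1 - c * η⁻¹) * α ≤ (B.card : ℝ) := by
    have hq : η * (c * η⁻¹) = c := by field_simp
    have hUnn : 0 ≤ ∑ x ∈ Bᶜ, g x := Finset.sum_nonneg fun x _ => hg0 x
    nlinarith [hU, hBle, hBsum, mul_pos hη0 hα0, hα0, hη0]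
  -- upper bound on the size of S2
  have h2η : (5 : ℝ) / 6 < 1 - 2 * η := by linarith
  set T : ℝ := ∑ x ∈ S2, (α - g x) with hTdef
  have hT0 : 0 ≤ T := Finset.sum_nonneg fun x _ => by linarith [hgle x]
  have hT : T ≤ (6 / 5) * c * α ^ 2 := by
    have hpt : ∀ x ∈ S2, (1 - 2 * η) * α * (α - g x) ≤ g x * (α - g x) := by
      intro x hx
      rw [hmemS2] at hx
      nlinarith [hgle x]
    have hTs : (1 - 2 * η) * α * T ≤ c * α ^ 3 := by
      rw [hTdef, Finset.mul_sum]
      exact le_trans (Finset.sum_le_sum hpt)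
        (le_trans (Finset.sum_le_univ_sum_of_nonneg hggen) hD)
    have h56 : (5 / 6) * α * T ≤ c * α ^ 3 := by
      nlinarith [hTs, mul_nonneg (mul_nonneg (by linarith : (0:ℝ) ≤ 1 - 2 * η - 5 / 6) hα0.le) hT0]
    have := le_of_mul_le_mul_right (by nlinarith [h56] : T * ((5 / 6) * α) ≤ ((6 / 5) * c * α ^ 2) * ((5 / 6) * α)) (by linarith [hα0])
    exact this
  have hS2card : (S2.card : ℝ) ≤ (1 + (6 / 5) * c) * α := by
    have h1 : ∑ x ∈ S2, g x ≤ α ^ 2 := by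
      rw [← hsum]
      exact Finset.sum_le_univ_sum_of_nonneg hg0
    have h2 : (S2.card : ℝ) * α = ∑ x ∈ S2, g x + T := by
      rw [hTdef, ← Finset.sum_add_distrib]
      simp [Finset.sum_const, nsmul_eq_mul]
    have h3 : (S2.card : ℝ) * α ≤ (1 + (6 / 5) * c) * α * α := by nlinarith [h1, hT]
    exact le_of_mul_le_mul_right (by nlinarith [h3]) hα0
  -- numeric facts
  have hc12 : c * η⁻¹ ≤ 1 / 12 := by
    have hq : η * η⁻¹ = 1 := mul_inv_cancel₀ (ne_of_gt hη0)
    have := mul_le_mul_of_nonneg_right hη1 (inv_nonneg.2 hη0.le)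
    nlinarith [this, hq]
  have hc144 : c ≤ 1 / 144 := by linarith
  have hB11 : (11 / 12) * α ≤ (B.card : ℝ) := by nlinarith [hBcard, hc12, hα0]
  have hS2small : (S2.card : ℝ) ≤ (121 / 120) * α := by nlinarith [hS2card, hc144, hα0]
  have hkey : (S2.card : ℝ) < (3 / 2) * (B.card : ℝ) := by nlinarith [hB11, hS2small, hα0]
  -- B is a symmetric neighbourhood of 1
  have hB1 : (1 : G) ∈ B := (hmemB 1).2 (by rw [hg1]; nlinarith [hα0, hη0])
  have hBinv : ∀ x ∈ B, x⁻¹ ∈ B := fun x hx =>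
    (hmemB x⁻¹).2 (by rw [hginv]; exact (hmemB x).1 hx)
  -- the candidate subgroup: K = B * B
  set K : Finset G := B * B with hKdef
  have hKS2 : K ⊆ S2 := by
    intro x hx
    obtain ⟨b₁, hb₁, b₂, hb₂, rfl⟩ := Finset.mem_mul.1 hx
    refine (hmemS2 _).2 ?_
    have h1 := (hmemB b₁).1 hb₁
    have h2 := (hmemB b₂).1 hb₂
    have h3 := hgmul b₁ b₂
    linarith
  have hBK : B ⊆ K := fun b hb => Finset.mem_mul.2 ⟨b, hb, 1, hB1, mul_one b⟩
  have hK1 : (1 : G) ∈ K := hBK hB1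
  have hKinv : ∀ x ∈ K, x⁻¹ ∈ K := by
    intro x hx
    obtain ⟨b₁, hb₁, b₂, hb₂, rfl⟩ := Finset.mem_mul.1 hx
    exact Finset.mem_mul.2 ⟨b₂⁻¹, hBinv _ hb₂, b₁⁻¹, hBinv _ hb₁, (mul_inv_rev b₁ b₂).symm⟩
  have hsmulS2 : ∀ b ∈ B, b • B ⊆ S2 := by
    intro b hb
    refine Finset.Subset.trans ?_ hKS2
    intro z hz
    rw [Finset.mem_smul_finset] at hz
    obtain ⟨y, hy, rfl⟩ := hz
    exact Finset.mem_mul.2 ⟨b, hb, y, hy, rfl⟩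
  -- key intersection estimate
  have L1 : ∀ x ∈ K, (B.card : ℝ) / 2 < ((x • B ∩ B).card : ℝ) := by
    intro x hx
    obtain ⟨b₁, hb₁, b₂, hb₂, rfl⟩ := Finset.mem_mul.1 hx
    have hi : b₁⁻¹ • ((b₁ * b₂) • B ∩ B) = b₂ • B ∩ b₁⁻¹ • B := by
      rw [Finset.smul_finset_inter, smul_smul, inv_mul_cancel_left]
    have hcard : ((b₁ * b₂) • B ∩ B).card = (b₂ • B ∩ b₁⁻¹ • B).card := by
      rw [← hi, Finset.card_smul_finset]
    have hsub : (b₂ • B ∪ b₁⁻¹ • B) ⊆ S2 :=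
      Finset.union_subset (hsmulS2 _ hb₂) (hsmulS2 _ (hBinv _ hb₁))
    have hui := Finset.card_union_add_card_inter (b₂ • B) (b₁⁻¹ • B)
    have h1 : (b₂ • B).card = B.card := Finset.card_smul_finset _ _
    have h2 : (b₁⁻¹ • B).card = B.card := Finset.card_smul_finset _ _
    have h3 : ((b₂ • B ∪ b₁⁻¹ • B).card : ℝ) ≤ (S2.card : ℝ) := by
      exact_mod_cast Finset.card_le_card hsub
    have h4 : ((b₂ • B ∪ b₁⁻¹ • B).card : ℝ) + ((b₂ • B ∩ b₁⁻¹ • B).card : ℝ)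
        = (B.card : ℝ) + (B.card : ℝ) := by
      rw [h1, h2] at hui
      exact_mod_cast hui
    rw [hcard]
    push_cast
    linarith [hkey]
  -- closure of K under multiplication
  have hmulK : ∀ x ∈ K, ∀ y ∈ K, x * y ∈ K := by
    intro x hx y hy
    have hx' := L1 x⁻¹ (hKinv x hx)
    have hy' := L1 y hy
    have hnon : ((x⁻¹ • B ∩ B) ∩ (y • B ∩ B)).Nonempty := by
      rw [← Finset.card_pos]
      by_contra hcon
      push_neg at hcon
      have h0 : ((x⁻¹ • B ∩ B) ∩ (y • B ∩ B)).card = 0 := Nat.le_zero.1 hcon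
      have hcu : (x⁻¹ • B ∩ B) ∪ (y • B ∩ B) ⊆ B :=
        Finset.union_subset Finset.inter_subset_right Finset.inter_subset_right
      have hui := Finset.card_union_add_card_inter (x⁻¹ • B ∩ B) (y • B ∩ B)
      rw [h0, Nat.add_zero] at hui
      have h5 : ((x⁻¹ • B ∩ B) ∪ (y • B ∩ B)).card ≤ B.card := Finset.card_le_card hcu
      have h6 : ((x⁻¹ • B ∩ B).card : ℝ) + ((y • B ∩ B).card : ℝ) ≤ (B.card : ℝ) := by
        exact_mod_cast hui ▸ (Nat.cast_le.2 h5)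
      linarith [hx', hy']
    obtain ⟨w, hw⟩ := hnon
    simp only [Finset.mem_inter] at hw
    obtain ⟨⟨hw1, -⟩, hw2, -⟩ := hw
    rw [Finset.mem_smul_finset] at hw1 hw2
    obtain ⟨p, hp, hpe⟩ := hw1
    obtain ⟨q, hq, hqe⟩ := hw2
    have hpq : x * y = p * q⁻¹ := by
      have h1 : x⁻¹ * p = y * q := by
        rw [← smul_eq_mul, ← smul_eq_mul, hpe, hqe]
      have h2 : p = x * (y * q) := by rw [← h1, mul_inv_cancel_left]
      rw [h2]
      group
    rw [hpq]
    exact Finset.mem_mul.2 ⟨p, hp, q⁻¹, hBinv _ hq, rfl⟩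
  -- the subgroup
  let H : Subgroup G :=
    { carrier := ↑K
      mul_mem' := fun {a b} ha hb => hmulK a ha b hb
      one_mem' := hK1
      inv_mem' := fun {a} ha => hKinv a ha }
  have hHset : (H : Set G) = ↑K := rfl
  have hHdensity : density (H : Set G) = (K.card : ℝ) / N := by
    rw [density, hHset, Nat.card_coe_set_eq, Set.ncard_coe_finset]
  have hKB : (B.card : ℝ) ≤ (K.card : ℝ) := by exact_mod_cast Finset.card_le_card hBK
  -- the counting function for cosets
  set M : G → ℕ := fun x => (Finset.univ.filter (fun v => v ∈ A ∧ v * x⁻¹ ∈ K)).card with hMdef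
  have hMreal : ∀ x : G, (M x : ℝ) =
      ∑ v : G, indR A v * (if v * x⁻¹ ∈ K then (1 : ℝ) else 0) := by
    intro x
    rw [hMdef]
    simp only
    rw [Finset.card_filter]
    push_cast
    refine Finset.sum_congr rfl fun v _ => ?_
    by_cases h1 : v ∈ A <;> by_cases h2 : v * x⁻¹ ∈ K <;>
      simp [indR, Set.indicator_apply, h1, h2]
  have hgexp : ∀ h : G, g h = ∑ y : G, indR A y * indR A (h⁻¹ * y) := fun h =>
    FournierAux.cnt_eq_sum h
  have hMsum : ∑ x ∈ FournierAux.AF A, (M x : ℝ) = ∑ h ∈ K, g h := by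
    have hL : ∑ x ∈ FournierAux.AF A, (M x : ℝ) = ∑ x : G, indR A x * (M x : ℝ) := by
      rw [FournierAux.AF, Finset.sum_filter]
      refine Finset.sum_congr rfl fun x _ => ?_
      by_cases h : x ∈ A <;> simp [indR, Set.indicator_apply, h]
    have hR : ∑ h ∈ K, g h = ∑ h : G, (if h ∈ K then g h else 0) := by
      rw [Finset.sum_ite_mem, Finset.univ_inter]
    have hcore : ∑ x : G, indR A x * (M x : ℝ) = ∑ h : G, (if h ∈ K then g h else 0) := by
      calc ∑ x : G, indR A x * (M x : ℝ)
          = ∑ x : G, ∑ v : G, indR A x * (indR A v * (if v * x⁻¹ ∈ K then (1:ℝ) else 0)) := by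
            refine Finset.sum_congr rfl fun x _ => ?_
            rw [hMreal x, Finset.mul_sum]
        _ = ∑ v : G, ∑ x : G, indR A v * (indR A x * (if v * x⁻¹ ∈ K then (1:ℝ) else 0)) := by
            rw [Finset.sum_comm]
            exact Finset.sum_congr rfl fun v _ => Finset.sum_congr rfl fun x _ => by ring
        _ = ∑ v : G, ∑ h : G, indR A v * ((if h ∈ K then (1:ℝ) else 0) * indR A (h⁻¹ * v)) := by
            refine Finset.sum_congr rfl fun v _ => ?_
            refine Fintype.sum_equiv ((Equiv.inv G).trans (Equiv.mulLeft v)) _ _ fun x => ?_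
            have h1 : ((Equiv.inv G).trans (Equiv.mulLeft v)) x = v * x⁻¹ := rfl
            rw [h1]
            have h2 : (v * x⁻¹)⁻¹ * v = x := by group
            rw [h2]
            ring
        _ = ∑ h : G, (if h ∈ K then (1:ℝ) else 0) * ∑ y : G, indR A y * indR A (h⁻¹ * y) := by
            rw [Finset.sum_comm]
            refine Finset.sum_congr rfl fun h _ => ?_
            rw [Finset.mul_sum]
            exact Finset.sum_congr rfl fun y _ => by ring
        _ = ∑ h : G, (if h ∈ K then g h else 0) := by
            refine Finset.sum_congr rfl fun h _ => ?_
            rw [← hgexp h]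
            by_cases hh : h ∈ K <;> simp [hh]
    rw [hL, hcore, ← hR]
  -- lower bound for the sum over K
  have hKcard : (11 / 12) * α ≤ (K.card : ℝ) := le_trans hB11 hKB
  have hKT : ∑ h ∈ K, (α - g h) ≤ (6 / 5) * c * α ^ 2 := by
    refine le_trans ?_ hT
    rw [hTdef]
    exact Finset.sum_le_sum_of_subset_of_nonneg hKS2 (fun x _ _ => by linarith [hgle x])
  have hKg : (K.card : ℝ) * α - (6 / 5) * c * α ^ 2 ≤ ∑ h ∈ K, g h := by
    have heq : ∑ h ∈ K, (α - g h) = (K.card : ℝ) * α - ∑ h ∈ K, g h := by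
      rw [Finset.sum_sub_distrib]
      simp [Finset.sum_const, nsmul_eq_mul]
    linarith [hKT, heq.symm.le, heq.le]
  have hfinal : (1 - 2 * η) * (K.card : ℝ) * α ≤ ∑ x ∈ FournierAux.AF A, (M x : ℝ) := by
    rw [hMsum]
    nlinarith [hKg,
      mul_le_mul_of_nonneg_left hKcard (mul_nonneg (by linarith : (0:ℝ) ≤ 2 * η) hα0.le),
      mul_le_mul_of_nonneg_right (by linarith : (6:ℝ) / 5 * c ≤ 11 / 6 * η)
        (mul_nonneg hα0.le hα0.le)]
  -- pigeonhole
  have hAFne : (FournierAux.AF A).Nonempty := ⟨a0, FournierAux.mem_AF.2 ha0⟩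
  have hconst : ∑ _x ∈ FournierAux.AF A, ((1 - 2 * η) * (K.card : ℝ)) ≤
      ∑ x ∈ FournierAux.AF A, (M x : ℝ) := by
    rw [Finset.sum_const, nsmul_eq_mul]
    calc ((FournierAux.AF A).card : ℝ) * ((1 - 2 * η) * (K.card : ℝ))
        = (1 - 2 * η) * (K.card : ℝ) * α := by rw [← hαdef]; ring
      _ ≤ _ := hfinal
  obtain ⟨x, hxA, hxM⟩ := Finset.exists_le_of_sum_le hAFne hconst
  -- final assembly
  refine ⟨H, x, ?_, ?_⟩
  · rw [hdA, hHdensity]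
    have h5 : (1 - c * η⁻¹) * α ≤ (K.card : ℝ) := le_trans hBcard hKB
    calc (1 - c * η⁻¹) * (α / N) = ((1 - c * η⁻¹) * α) / N := by ring
      _ ≤ (K.card : ℝ) / N := by
          exact div_le_div_of_nonneg_right h5 hN0.le
  · have hden : density (A ∩ ((fun h => h * x) '' (H : Set G))) = (M x : ℝ) / N := by
      have hset : A ∩ ((fun h => h * x) '' (H : Set G)) =
          ↑(Finset.univ.filter (fun v => v ∈ A ∧ v * x⁻¹ ∈ K)) := by
        rw [hHset]
        ext v
        constructor
        · rintro ⟨hv, w, hw, rfl⟩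
          have hwK : w ∈ K := Finset.mem_coe.1 hw
          refine Finset.mem_coe.2 (Finset.mem_filter.2 ⟨Finset.mem_univ _, hv, ?_⟩)
          rwa [mul_inv_cancel_right]
        · intro hv
          obtain ⟨-, hv1, hv2⟩ := Finset.mem_filter.1 (Finset.mem_coe.1 hv)
          exact ⟨hv1, v * x⁻¹, Finset.mem_coe.2 hv2, by group⟩
      rw [density, hset, Nat.card_coe_set_eq, Set.ncard_coe_finset, hMdef]
    rw [hden, hHdensity]
    calc (1 - 2 * η) * ((K.card : ℝ) / N) = ((1 - 2 * η) * (K.card : ℝ)) / N := by ring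
      _ ≤ (M x : ℝ) / N := by
          exact div_le_div_of_nonneg_right hxM hN0.le
end
end

section
/- Largeness of symmetry sets: Suppose that G is a finite group, A ⊆ G is nonempty with ‖1_A∗1_{A⁻¹}‖²_{L²(μ_G)} ≥ c·μ_G(A)³ for some c ∈ [0,1], and δ ∈ (0,1]. Then min{ μ_G(A·A⁻¹), δ⁻¹·μ_G(A) } ≥ μ_G(Sym_δ(A)) ≥ (c − δ)·μ_G(A). -/
open scoped BigOperators Pointwise

noncomputable section

variable {G : Type*}

section Aux
variable {G : Type*}

lemma indR_nonneg (A : Set G) (x : G) : 0 ≤ indR A x :=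
  Set.indicator_nonneg (fun _ _ => zero_le_one) x

lemma indR_le_one (A : Set G) (x : G) : indR A x ≤ 1 := by
  classical
  simp only [indR, Set.indicator_apply, Pi.one_apply]
  split_ifs <;> norm_num

lemma sum_indR [Fintype G] (A : Set G) : ∑ x : G, indR A x = Nat.card A := by
  classical
  simp only [indR, Set.indicator_apply, Pi.one_apply]
  rw [Finset.sum_ite, Finset.sum_const, Finset.sum_const_zero, add_zero, nsmul_eq_mul, mul_one]
  norm_cast
  rw [Nat.card_eq_card_toFinset]
  congr 1
  ext a; simp

lemma convR_nonneg [Group G] [Fintype G] (A B : Set G) (x : G) :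
    0 ≤ convR (indR A) (indR B) x :=
  mul_nonneg (by positivity) (Finset.sum_nonneg fun y _ =>
    mul_nonneg (indR_nonneg A y) (indR_nonneg B _))

lemma convR_le_density [Group G] [Fintype G] (A B : Set G) (x : G) :
    convR (indR A) (indR B) x ≤ density A := by
  have h : ∑ y : G, indR A y * indR B (y⁻¹ * x) ≤ ∑ y : G, indR A y :=
    Finset.sum_le_sum fun y _ => by
      calc indR A y * indR B (y⁻¹ * x) ≤ indR A y * 1 :=
            mul_le_mul_of_nonneg_left (indR_le_one B _) (indR_nonneg A y)
        _ = indR A y := mul_one _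
  calc convR (indR A) (indR B) x ≤ (Fintype.card G : ℝ)⁻¹ * ∑ y : G, indR A y :=
        mul_le_mul_of_nonneg_left h (by positivity)
    _ = density A := by rw [sum_indR, density, div_eq_inv_mul]

lemma card_inv_set [Group G] [Fintype G] (A : Set G) : Nat.card ↥(A⁻¹) = Nat.card ↥A := by
  simp

lemma avg_convR [Group G] [Fintype G] (A : Set G) :
    (Fintype.card G : ℝ)⁻¹ * ∑ x : G, convR (indR A) (indR A⁻¹) x = density A ^ 2 := by
  have hshift : ∀ y : G, ∑ x : G, indR A⁻¹ (y⁻¹ * x) = (Nat.card ↥A : ℝ) := by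
    intro y
    rw [← card_inv_set A, ← sum_indR (A⁻¹)]
    exact Equiv.sum_comp (Equiv.mulLeft y⁻¹) (indR A⁻¹)
  have : ∑ x : G, convR (indR A) (indR A⁻¹) x
      = (Fintype.card G : ℝ)⁻¹ * (Nat.card ↥A : ℝ) ^ 2 := by
    simp only [convR, ← Finset.mul_sum]
    congr 1
    rw [Finset.sum_comm]
    calc ∑ y : G, ∑ x : G, indR A y * indR A⁻¹ (y⁻¹ * x)
        = ∑ y : G, indR A y * (Nat.card ↥A : ℝ) := by
          refine Finset.sum_congr rfl fun y _ => ?_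
          rw [← Finset.mul_sum, hshift y]
      _ = (Nat.card ↥A : ℝ) ^ 2 := by
          rw [← Finset.sum_mul, sum_indR]; ring
  rw [this, density]
  have hG : (0:ℝ) < (Fintype.card G : ℝ) := by positivity
  rw [div_pow, eq_div_iff (by positivity)]
  have : (Fintype.card G : ℝ) ^ 2 * ((Fintype.card G : ℝ)⁻¹) ^ 2 = 1 := by
    rw [← mul_pow, mul_inv_cancel₀ hG.ne']; norm_num
  linear_combination (Nat.card ↥A : ℝ) ^ 2 * this

end Aux

/-- Largeness of symmetry sets: if `A` has multiplicative energy at least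
`c·μ_G(A)³` then `min{μ_G(A·A⁻¹), δ⁻¹·μ_G(A)} ≥ μ_G(Sym_δ(A)) ≥ (c−δ)·μ_G(A)`. -/
theorem symmSet_largeness {G : Type*} [Group G] [Fintype G]
    (A : Set G) (hA : A.Nonempty) (c : ℝ) (hc0 : 0 ≤ c) (hc1 : c ≤ 1)
    (hEnergy : c * density A ^ 3 ≤
      (Fintype.card G : ℝ)⁻¹ * ∑ x : G, (convR (indR A) (indR A⁻¹) x) ^ 2)
    (δ : ℝ) (hδ0 : 0 < δ) (hδ1 : δ ≤ 1) :
    (c - δ) * density A ≤ density (symmSet A δ) ∧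
    density (symmSet A δ) ≤ min (density (A * A⁻¹)) (δ⁻¹ * density A) := by
  classical
  set f := convR (indR A) (indR A⁻¹) with hf
  set dA := density A with hdAdef
  have hG : (0:ℝ) < (Fintype.card G : ℝ) := by
    have := Fintype.card_pos (α := G); positivity
  have hAcard : (0:ℝ) < (Nat.card ↥A : ℝ) := by
    have h1 : Nat.card ↥A ≠ 0 := Nat.card_ne_zero.mpr ⟨hA.to_subtype, Set.toFinite A⟩
    positivity
  have hdA0 : 0 < dA := div_pos hAcard hG
  set S := symmSet A δ with hSdef
  set T := Finset.univ.filter (· ∈ S) with hT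
  have hScard : (Nat.card ↥S : ℝ) = T.card := by
    rw [Nat.card_eq_card_toFinset]
    norm_cast
    congr 1
    ext a; simp [hT]
  have hdS : density S = T.card / Fintype.card G := by rw [density, hScard]
  have hfub : ∀ x, f x ≤ dA := convR_le_density A A⁻¹
  have hf0 : ∀ x, 0 ≤ f x := convR_nonneg A A⁻¹
  have havg : (Fintype.card G : ℝ)⁻¹ * ∑ x : G, f x = dA ^ 2 := avg_convR A
  have hmem : ∀ x ∈ T, δ * dA ≤ f x := fun x hx => (Finset.mem_filter.mp hx).2
  constructor
  · -- lower bound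
    have hsplit : ∑ x : G, f x ^ 2
        = ∑ x ∈ T, f x ^ 2 + ∑ x ∈ Finset.univ.filter (fun x => ¬ x ∈ S), f x ^ 2 :=
      (Finset.sum_filter_add_sum_filter_not Finset.univ (· ∈ S) _).symm
    have hb1 : ∑ x ∈ T, f x ^ 2 ≤ T.card * dA ^ 2 := by
      calc ∑ x ∈ T, f x ^ 2 ≤ ∑ x ∈ T, dA ^ 2 :=
            Finset.sum_le_sum fun x _ => pow_le_pow_left₀ (hf0 x) (hfub x) 2
        _ = T.card * dA ^ 2 := by rw [Finset.sum_const, nsmul_eq_mul]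
    have hb2 : ∑ x ∈ Finset.univ.filter (fun x => ¬ x ∈ S), f x ^ 2
        ≤ δ * dA * ∑ x : G, f x := by
      calc ∑ x ∈ Finset.univ.filter (fun x => ¬ x ∈ S), f x ^ 2
          ≤ ∑ x ∈ Finset.univ.filter (fun x => ¬ x ∈ S), δ * dA * f x := by
            refine Finset.sum_le_sum fun x hx => ?_
            have hxS : ¬ x ∈ S := (Finset.mem_filter.mp hx).2
            have : f x ≤ δ * dA := le_of_not_ge hxS
            rw [sq]
            exact mul_le_mul_of_nonneg_right this (hf0 x)
        _ = δ * dA * ∑ x ∈ Finset.univ.filter (fun x => ¬ x ∈ S), f x := by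
            rw [Finset.mul_sum]
        _ ≤ δ * dA * ∑ x : G, f x := by
            refine mul_le_mul_of_nonneg_left ?_ (by positivity)
            exact Finset.sum_le_sum_of_subset_of_nonneg (Finset.filter_subset _ _)
              (fun x _ _ => hf0 x)
    have key : c * dA ^ 3 ≤ density S * dA ^ 2 + δ * dA ^ 3 := by
      have h1 : (Fintype.card G : ℝ)⁻¹ * ∑ x : G, f x ^ 2
          ≤ (Fintype.card G : ℝ)⁻¹ * (T.card * dA ^ 2 + δ * dA * ∑ x : G, f x) := by
        refine mul_le_mul_of_nonneg_left ?_ (by positivity)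
        rw [hsplit]; exact add_le_add hb1 hb2
      have h2 : (Fintype.card G : ℝ)⁻¹ * (T.card * dA ^ 2 + δ * dA * ∑ x : G, f x)
          = density S * dA ^ 2 + δ * dA ^ 3 := by
        rw [hdS]
        have : δ * dA ^ 3 = δ * dA * ((Fintype.card G : ℝ)⁻¹ * ∑ x : G, f x) := by
          rw [havg]; ring
        rw [this, div_eq_mul_inv]; ring
      calc c * dA ^ 3 ≤ (Fintype.card G : ℝ)⁻¹ * ∑ x : G, f x ^ 2 := hEnergy
        _ ≤ _ := h1
        _ = _ := h2
    nlinarith [key, mul_pos hdA0 hdA0]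
  · refine le_min ?_ ?_
    · -- S ⊆ A * A⁻¹
      have hsub : S ⊆ A * A⁻¹ := by
        intro x hx
        by_contra hxn
        have hzero : f x = 0 := by
          rw [hf, convR]
          have : ∀ y : G, indR A y * indR A⁻¹ (y⁻¹ * x) = 0 := by
            intro y
            by_contra hy
            have hyA : y ∈ A := by
              by_contra h
              exact hy (by simp only [indR]; rw [Set.indicator_of_notMem h, zero_mul])
            have hyx : y⁻¹ * x ∈ A⁻¹ := by
              by_contra h
              exact hy (by simp only [indR]; rw [Set.indicator_of_notMem h, mul_zero])
            exact hxn ⟨y, hyA, y⁻¹ * x, hyx, by group⟩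
          rw [Finset.sum_congr rfl fun y _ => this y, Finset.sum_const_zero, mul_zero]
        have : δ * dA ≤ f x := hx
        nlinarith [mul_pos hδ0 hdA0]
      have hle : Nat.card ↥S ≤ Nat.card ↥(A * A⁻¹) := by
        rw [Nat.card_coe_set_eq, Nat.card_coe_set_eq]
        exact Set.ncard_le_ncard hsub (Set.toFinite _)
      rw [density, density]
      gcongr
    · have key2 : δ * dA * T.card ≤ ∑ x : G, f x := by
        calc δ * dA * T.card = ∑ _x ∈ T, δ * dA := by
              rw [Finset.sum_const, nsmul_eq_mul]; ring
          _ ≤ ∑ x ∈ T, f x := Finset.sum_le_sum hmem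
          _ ≤ ∑ x : G, f x := Finset.sum_le_sum_of_subset_of_nonneg
              (Finset.filter_subset _ _) (fun x _ _ => hf0 x)
      have key3 : δ * dA * density S ≤ dA ^ 2 := by
        have h1 := mul_le_mul_of_nonneg_left key2 (le_of_lt (inv_pos.mpr hG))
        rw [hdS]
        calc δ * dA * ((T.card : ℝ) / (Fintype.card G : ℝ))
            = (Fintype.card G : ℝ)⁻¹ * (δ * dA * T.card) := by rw [div_eq_mul_inv]; ring
          _ ≤ (Fintype.card G : ℝ)⁻¹ * ∑ x : G, f x := h1
          _ = dA ^ 2 := havg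
      rw [inv_mul_eq_div, le_div_iff₀ hδ0]
      nlinarith [key3, hdA0, hδ0]
end
end

section
/- Approximate projection onto high-threshold symmetry sets: Suppose that G is a finite group, A ⊆ G is nonempty and ε ∈ (0,1]. Then for every probability density ν : G → ℝ≥0 (i.e. (1/|G|)·∑_{x∈G} ν(x) = 1) with support contained in Sym_{1−ε}(A), one has (1/|A|)·∑_{x∈A} |1 − ν∗1_A(x)| ≤ ε. -/
open scoped BigOperators Pointwise

noncomputable section

variable {G : Type*}

/-- Approximate projection: probability densities supported on `Sym_{1−ε}(A)`
almost fix `1_A` under convolution. -/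
theorem symmSet_approx_projection {G : Type*} [Group G] [Fintype G]
    (A : Set G) (hA : A.Nonempty) (ε : ℝ) (hε0 : 0 < ε) (hε1 : ε ≤ 1)
    (ν : G → ℝ) (hν0 : ∀ x, 0 ≤ ν x)
    (hν1 : (Fintype.card G : ℝ)⁻¹ * ∑ x : G, ν x = 1)
    (hsupp : ∀ x, ν x ≠ 0 → x ∈ symmSet A (1 - ε)) :
    (Nat.card A : ℝ)⁻¹ *
        ∑ x : G, Set.indicator A (fun x => |1 - convR ν (indR A) x|) x ≤ ε := by

  classical
  set N : ℝ := (Fintype.card G : ℝ) with hNdef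
  have hN : 0 < N := by
    simp only [hNdef]
    exact_mod_cast Fintype.card_pos (α := G)
  have ha : 0 < (Nat.card A : ℝ) := by
    have : Nat.card A ≠ 0 := Nat.card_ne_zero.mpr ⟨hA.to_subtype, inferInstance⟩
    exact_mod_cast Nat.pos_of_ne_zero this
  set a : ℝ := (Nat.card A : ℝ) with hadef
  have hind0 : ∀ x : G, 0 ≤ indR A x := fun x =>
    Set.indicator_nonneg (fun _ _ => zero_le_one) x
  have hind1 : ∀ x : G, indR A x ≤ 1 := by
    intro x
    by_cases h : x ∈ A <;> simp [indR, h]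
  -- bounds on the convolution
  have hconv0 : ∀ x : G, 0 ≤ convR ν (indR A) x := by
    intro x
    refine mul_nonneg (by positivity) (Finset.sum_nonneg fun y _ => ?_)
    exact mul_nonneg (hν0 y) (hind0 _)
  have hconv1 : ∀ x : G, convR ν (indR A) x ≤ 1 := by
    intro x
    have hsum : ∑ y : G, ν y * indR A (y⁻¹ * x) ≤ ∑ y : G, ν y :=
      Finset.sum_le_sum fun y _ => by
        calc ν y * indR A (y⁻¹ * x) ≤ ν y * 1 :=
              mul_le_mul_of_nonneg_left (hind1 _) (hν0 y)
          _ = ν y := mul_one _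
    calc convR ν (indR A) x = N⁻¹ * ∑ y : G, ν y * indR A (y⁻¹ * x) := rfl
      _ ≤ N⁻¹ * ∑ y : G, ν y := by
          exact mul_le_mul_of_nonneg_left hsum (by positivity)
      _ = 1 := hν1
  -- the indicator simplifies
  have hpt : ∀ x : G, Set.indicator A (fun x => |1 - convR ν (indR A) x|) x
      = indR A x * (1 - convR ν (indR A) x) := by
    intro x
    by_cases h : x ∈ A
    · rw [Set.indicator_of_mem h]
      rw [abs_of_nonneg (by linarith [hconv1 x])]
      simp [indR, h]
    · simp [indR, Set.indicator_of_notMem h]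
  have hsumind : ∑ x : G, indR A x = a := by
    have : ∑ x : G, indR A x = ∑ x : G, (if x ∈ A then (1:ℝ) else 0) := by
      refine Finset.sum_congr rfl fun x _ => ?_
      by_cases h : x ∈ A <;> simp [indR, h]
    rw [this, Finset.sum_boole, hadef, Nat.card_eq_fintype_card]
    norm_cast
    rw [Fintype.card_subtype]
  set c : G → ℝ := fun y => ∑ x : G, indR A x * indR A (y⁻¹ * x) with hcdef
  set S : ℝ := ∑ x : G, indR A x * convR ν (indR A) x with hSdef
  have hS : S = N⁻¹ * ∑ y : G, ν y * c y := by
    have h1 : S = ∑ y : G, ∑ x : G, N⁻¹ * (ν y * (indR A x * indR A (y⁻¹ * x))) := by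
      rw [hSdef, Finset.sum_comm]
      refine Finset.sum_congr rfl fun x _ => ?_
      simp only [convR, Finset.mul_sum]
      refine Finset.sum_congr rfl fun y _ => ?_
      ring
    rw [h1, Finset.mul_sum]
    refine Finset.sum_congr rfl fun y _ => ?_
    simp only [hcdef]
    rw [Finset.mul_sum, Finset.mul_sum]
  -- lower bound on c y on the support
  have hcy : ∀ y : G, ν y ≠ 0 → (1 - ε) * a ≤ c y := by
    intro y hy
    have hmem := hsupp y hy
    have hconvy : convR (indR A) (indR A⁻¹) y = N⁻¹ * c y := by
      simp only [convR, hcdef]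
      congr 1
      refine Finset.sum_congr rfl fun z _ => ?_
      congr 1
      have : indR A⁻¹ (z⁻¹ * y) = indR A (y⁻¹ * z) := by
        by_cases h : z⁻¹ * y ∈ A⁻¹
        · have h' : y⁻¹ * z ∈ A := by
            rw [Set.mem_inv] at h
            simpa [mul_inv_rev] using h
          simp [indR, h, h']
        · have h' : y⁻¹ * z ∉ A := by
            intro hc
            exact h (by rw [Set.mem_inv]; simpa [mul_inv_rev] using hc)
          simp [indR, h, h']
      exact this
    have hdens : density A = a / N := by
      simp [density, hadef, hNdef]
    have h1 : (1 - ε) * (a / N) ≤ N⁻¹ * c y := by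
      rw [← hdens, ← hconvy]; exact hmem
    have hne : N ≠ 0 := hN.ne'
    calc (1 - ε) * a = (1 - ε) * (a / N) * N := by field_simp
      _ ≤ N⁻¹ * c y * N := mul_le_mul_of_nonneg_right h1 hN.le
      _ = c y := by field_simp
  have hlow : (1 - ε) * a ≤ S := by
    have hterm : ∀ y : G, ν y * ((1 - ε) * a) ≤ ν y * c y := by
      intro y
      by_cases hy : ν y = 0
      · simp [hy]
      · exact mul_le_mul_of_nonneg_left (hcy y hy) (hν0 y)
    have hsum : ∑ y : G, ν y * ((1 - ε) * a) ≤ ∑ y : G, ν y * c y :=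
      Finset.sum_le_sum fun y _ => hterm y
    have : N⁻¹ * ∑ y : G, ν y * ((1 - ε) * a) ≤ N⁻¹ * ∑ y : G, ν y * c y :=
      mul_le_mul_of_nonneg_left hsum (by positivity)
    rw [← hS] at this
    calc (1 - ε) * a = (N⁻¹ * ∑ y : G, ν y) * ((1 - ε) * a) := by rw [hν1]; ring
      _ = N⁻¹ * ∑ y : G, ν y * ((1 - ε) * a) := by
          rw [← Finset.sum_mul]; ring
      _ ≤ S := this
  -- conclude
  have hmain : ∑ x : G, Set.indicator A (fun x => |1 - convR ν (indR A) x|) x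
      = a - S := by
    rw [Finset.sum_congr rfl fun x _ => hpt x]
    have : ∑ x : G, indR A x * (1 - convR ν (indR A) x)
        = (∑ x : G, indR A x) - ∑ x : G, indR A x * convR ν (indR A) x := by
      rw [← Finset.sum_sub_distrib]
      refine Finset.sum_congr rfl fun x _ => ?_
      ring
    rw [this, hsumind, hSdef]
  rw [hmain]
  have : a - S ≤ ε * a := by nlinarith
  calc a⁻¹ * (a - S) ≤ a⁻¹ * (ε * a) :=
        mul_le_mul_of_nonneg_left this (by positivity)
    _ = ε := by field_simp
end
end
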